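/- arXiv:1311.2361 — 3 statements merged into one kernel-verified Lean document; each statement's English description precedes it below -/
import Mathlib

section
/- Let A be an n-by-n complex matrix with p(A) finite. If p(A) + a(A) = n, then p(A) = a(A) or p(A) ≤ a(A) − 2. -/
open Matrix

noncomputable section

/-- An `ι`-by-`ι` complex matrix `A` is a *partial isometry* if `‖Ax‖ = ‖x‖` for every
vector `x` in the orthogonal complement of `ker A` (Euclidean structure). -/
def Matrix.IsPartialIsometry {ι : Type*} [Fintype ι] [DecidableEq ι]
    (A : Matrix ι ι ℂ) : Prop :=
  ∀ x ∈ (LinearMap.ker (Matrix.toEuclideanLin A))ᗮ, ‖Matrix.toEuclideanLin A x‖ = ‖x‖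

/-- The *power partial isometry index* `p(A)`: the supremum (in `ℕ∞`, possibly `⊤`) of the
nonnegative integers `j` such that `I, A, A², …, A^j` are all partial isometries. -/
def Matrix.pIndex {ι : Type*} [Fintype ι] [DecidableEq ι] (A : Matrix ι ι ℂ) : ℕ∞ :=
  sSup ((↑) '' {j : ℕ | ∀ i ≤ j, (A ^ i).IsPartialIsometry})

/-- The *ascent* `a(A)`: the smallest nonnegative integer `k` with `ker A^k = ker A^(k+1)`. -/
def Matrix.ascent {ι : Type*} [Fintype ι] [DecidableEq ι] (A : Matrix ι ι ℂ) : ℕ :=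
  sInf {k : ℕ | LinearMap.ker (Matrix.toEuclideanLin (A ^ k)) =
    LinearMap.ker (Matrix.toEuclideanLin (A ^ (k + 1)))}

/-- `A` is unitarily similar to `B` (allowing different, necessarily equipotent, index types):
`B = U* A U` for some unitary `U`. -/
def Matrix.UnitarilySimilarTo {ι κ : Type*} [Fintype ι] [Fintype κ] [DecidableEq ι]
    [DecidableEq κ] (A : Matrix ι ι ℂ) (B : Matrix κ κ ℂ) : Prop :=
  ∃ U : Matrix ι κ ℂ, Uᴴ * U = 1 ∧ U * Uᴴ = 1 ∧ B = Uᴴ * A * U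

/-- The `q`-by-`q` nilpotent Jordan block `J_q`. -/
def JordanBlock (q : ℕ) : Matrix (Fin q) (Fin q) ℂ :=
  Matrix.of fun a b => if (b : ℕ) = (a : ℕ) + 1 then 1 else 0

/-- `A` is of class `S_n`: a contraction whose eigenvalues all have moduli strictly
less than `1` and with `rank (1 - A*A) = 1`. -/
def Matrix.IsClassSn {n : ℕ} (A : Matrix (Fin n) (Fin n) ℂ) : Prop :=
  (∀ x : EuclideanSpace ℂ (Fin n), ‖Matrix.toEuclideanLin A x‖ ≤ ‖x‖) ∧
  (∀ z ∈ spectrum ℂ A, ‖z‖ < 1) ∧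
  (1 - Aᴴ * A).rank = 1



open LinearMap Submodule Module

noncomputable section AuxPI

variable {F : Type} [NormedAddCommGroup F] [InnerProductSpace ℂ F]

/-- Partial-isometry predicate for endomorphisms of an inner product space. -/
def LinPI (T : F →ₗ[ℂ] F) : Prop :=
  ∀ x ∈ (LinearMap.ker T)ᗮ, ‖T x‖ = ‖x‖

lemma linPI_of_ker_top {T : F →ₗ[ℂ] F} (h : LinearMap.ker T = ⊤) : LinPI T := by
  intro x hx
  rw [h, Submodule.top_orthogonal_eq_bot, Submodule.mem_bot] at hx
  subst hx
  rw [map_zero]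

lemma kerle (T : F →ₗ[ℂ] F) (j : ℕ) :
    LinearMap.ker (T ^ j) ≤ LinearMap.ker (T ^ (j + 1)) := by
  intro x hx
  rw [LinearMap.mem_ker] at hx ⊢
  rw [pow_succ', Module.End.mul_apply, hx, map_zero]

variable [FiniteDimensional ℂ F]

lemma LinPI.contraction {T : F →ₗ[ℂ] F} (hT : LinPI T) (x : F) : ‖T x‖ ≤ ‖x‖ := by
  have hxv : x - ↑(orthogonalProjection (LinearMap.ker T)ᗮ x) ∈ LinearMap.ker T := by
    have := Submodule.sub_starProjection_mem_orthogonal (K := (LinearMap.ker T)ᗮ) x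
    rwa [Submodule.orthogonal_orthogonal] at this
  have hTx : T x = T ↑(orthogonalProjection (LinearMap.ker T)ᗮ x) := by
    have h0 : T (x - ↑(orthogonalProjection (LinearMap.ker T)ᗮ x)) = 0 := hxv
    rw [map_sub, sub_eq_zero] at h0
    exact h0
  rw [hTx, hT _ (orthogonalProjection (LinearMap.ker T)ᗮ x).2]
  calc ‖(orthogonalProjection (LinearMap.ker T)ᗮ x : F)‖
      = ‖orthogonalProjection (LinearMap.ker T)ᗮ x‖ := by rw [Submodule.norm_coe]
    _ ≤ ‖orthogonalProjection (LinearMap.ker T)ᗮ‖ * ‖x‖ :=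
        (orthogonalProjection (LinearMap.ker T)ᗮ).le_opNorm x
    _ ≤ 1 * ‖x‖ := by gcongr; exact orthogonalProjection_norm_le (LinearMap.ker T)ᗮ
    _ = ‖x‖ := one_mul _

/-- If `T, …, T^(a+1)` are partial isometries and the kernel chain stabilizes at `a`,
then every power of `T` is a partial isometry. -/
lemma claim1 (T : F →ₗ[ℂ] F) (a : ℕ)
    (hpi : ∀ i ≤ a + 1, LinPI (T ^ i))
    (hker : LinearMap.ker (T ^ a) = LinearMap.ker (T ^ (a + 1))) :
    ∀ m, LinPI (T ^ m) := by
  have hstab : ∀ m, a ≤ m → LinearMap.ker (T ^ m) = LinearMap.ker (T ^ a) := by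
    intro m hm
    obtain ⟨j, rfl⟩ := Nat.exists_eq_add_of_le hm
    exact (Module.End.ker_pow_constant hker j).symm
  have hT : LinPI T := by
    have := hpi 1 (by omega)
    rwa [pow_one] at this
  have hcontr := hT.contraction
  set N := LinearMap.ker (T ^ a) with hN
  have hsub : ∀ x ∈ Nᗮ, T x ∈ Nᗮ ∧ ‖T x‖ = ‖x‖ := by
    intro x hx
    set v : F := ↑(orthogonalProjection Nᗮ (T x)) with hv
    have hvmem : v ∈ Nᗮ := (orthogonalProjection Nᗮ (T x)).2
    have humem : T x - v ∈ N := by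
      have := Submodule.sub_starProjection_mem_orthogonal (K := Nᗮ) (T x)
      rwa [Submodule.orthogonal_orthogonal] at this
    have e0 : (T ^ (a + 1)) x = (T ^ a) (T x) := by rw [pow_succ, Module.End.mul_apply]
    have e1 : (T ^ a) (T x) = (T ^ a) v := by
      have h0 : (T ^ a) (T x - v) = 0 := humem
      rw [map_sub, sub_eq_zero] at h0
      exact h0
    have h1 : ‖x‖ = ‖(T ^ (a + 1)) x‖ := by
      refine (hpi (a + 1) le_rfl x ?_).symm
      have e2 : LinearMap.ker (T ^ (a + 1)) = N := hstab (a + 1) (Nat.le_succ a)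
      rw [e2]
      exact hx
    have h3 : ‖(T ^ a) v‖ = ‖v‖ := hpi a (Nat.le_succ a) v hvmem
    have hxv : ‖x‖ = ‖v‖ := by rw [h1, e0, e1, h3]
    have hle : ‖T x‖ ≤ ‖x‖ := hcontr x
    have hinner : (inner ℂ (T x - v) v : ℂ) = 0 :=
      (Submodule.mem_orthogonal N v).mp hvmem _ humem
    have hpyth : ‖T x‖ ^ 2 = ‖T x - v‖ ^ 2 + ‖v‖ ^ 2 := by
      have h5 := norm_add_sq (𝕜 := ℂ) (T x - v) v
      rw [hinner] at h5
      simp only [map_zero, mul_zero, add_zero] at h5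
      calc ‖T x‖ ^ 2 = ‖T x - v + v‖ ^ 2 := by rw [sub_add_cancel]
        _ = ‖T x - v‖ ^ 2 + ‖v‖ ^ 2 := h5
    have h6 : ‖T x‖ ≤ ‖v‖ := by rw [← hxv]; exact hle
    have h8 : ‖T x - v‖ = 0 := by
      nlinarith [norm_nonneg (T x - v), norm_nonneg (T x), norm_nonneg v]
    have hTxv : T x = v := sub_eq_zero.mp (norm_eq_zero.mp h8)
    constructor
    · rw [hTxv]; exact hvmem
    · rw [hTxv]; exact hxv.symm
  have hiter : ∀ m, ∀ x ∈ Nᗮ, (T ^ m) x ∈ Nᗮ ∧ ‖(T ^ m) x‖ = ‖x‖ := by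
    intro m
    induction m with
    | zero =>
      intro x hx
      refine ⟨?_, ?_⟩ <;> simp only [pow_zero, Module.End.one_apply]
      · exact hx
    | succ m ih =>
      intro x hx
      have h1 := ih x hx
      have h2 := hsub _ h1.1
      have e : (T ^ (m + 1)) x = T ((T ^ m) x) := by rw [pow_succ', Module.End.mul_apply]
      exact ⟨by rw [e]; exact h2.1, by rw [e, h2.2, h1.2]⟩
  intro m
  by_cases hm : m ≤ a + 1
  · exact hpi m hm
  · intro x hx
    have e : LinearMap.ker (T ^ m) = N := hstab m (by omega)
    rw [e] at hx
    exact (hiter m x hx).2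

end AuxPI

section ClaimL

open LinearMap Submodule Module

/-- Key counting lemma: if `T^i` is a partial isometry for `i ≤ t`, the kernel chain
strictly grows at step `t` but stabilizes at step `t+1`, and `T^(t+1)` is *not* a
partial isometry, then the dimension is at least `2t+2`. -/
lemma claimL (t : ℕ) : ∀ (F : Type) [NormedAddCommGroup F] [InnerProductSpace ℂ F]
    [FiniteDimensional ℂ F] (T : F →ₗ[ℂ] F),
    (∀ i ≤ t, LinPI (T ^ i)) →
    LinearMap.ker (T ^ (t + 1)) = LinearMap.ker (T ^ (t + 2)) →
    LinearMap.ker (T ^ t) ≠ LinearMap.ker (T ^ (t + 1)) →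
    ¬ LinPI (T ^ (t + 1)) →
    2 * t + 2 ≤ Module.finrank ℂ F := by
  induction t with
  | zero =>
    intro F _ _ _ T _ _ h3 h4
    have h3' : LinearMap.ker (T ^ 0) ≠ LinearMap.ker (T ^ 1) := h3
    have h4' : ¬ LinPI (T ^ 1) := h4
    by_contra hn
    push_neg at hn
    have hker : LinearMap.ker T ≠ ⊥ := by
      intro hbot
      apply h3'
      rw [pow_zero, pow_one, Module.End.one_eq_id, LinearMap.ker_id, hbot]
    have hpos : 0 < Module.finrank ℂ (LinearMap.ker T) := by
      rw [Module.finrank_pos_iff]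
      exact Submodule.nontrivial_iff_ne_bot.mpr hker
    have hle : Module.finrank ℂ (LinearMap.ker T) ≤ Module.finrank ℂ F :=
      Submodule.finrank_le _
    have htop : LinearMap.ker T = ⊤ := Submodule.eq_top_of_finrank_eq (by omega)
    apply h4'
    rw [pow_one]
    exact linPI_of_ker_top htop
  | succ s IH =>
    intro F _ _ _ T h1 h2 h3 h4
    have h2' : LinearMap.ker (T ^ (s + 2)) = LinearMap.ker (T ^ (s + 3)) := h2
    have h3' : LinearMap.ker (T ^ (s + 1)) ≠ LinearMap.ker (T ^ (s + 2)) := h3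
    have h4' : ¬ LinPI (T ^ (s + 2)) := h4
    clear h2 h3 h4
    have hT : LinPI T := by
      have := h1 1 (by omega)
      rwa [pow_one] at this
    set N := LinearMap.ker T with hN
    set M := Nᗮ with hM
    have hMN : Mᗮ = N := Submodule.orthogonal_orthogonal N
    -- N ≠ ⊥
    have hNbot : N ≠ ⊥ := by
      intro hbot
      apply h3'
      have hall : ∀ j : ℕ, LinearMap.ker (T ^ j) = ⊥ := by
        intro j
        induction j with
        | zero => rw [pow_zero, Module.End.one_eq_id, LinearMap.ker_id]
        | succ j ihj =>
          refine le_antisymm ?_ bot_le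
          intro x hx
          rw [LinearMap.mem_ker] at hx
          have hTx : T x ∈ LinearMap.ker (T ^ j) := by
            rw [LinearMap.mem_ker, ← Module.End.mul_apply, ← pow_succ]
            exact hx
          rw [ihj, Submodule.mem_bot] at hTx
          have : x ∈ N := hTx
          rw [hbot] at this
          exact this
      rw [hall, hall]
    -- the compression of T to M
    set D : M →ₗ[ℂ] M := (orthogonalProjection M).toLinearMap ∘ₗ T ∘ₗ M.subtype with hD
    have hDapply : ∀ y : M, (D y : F) = ↑(orthogonalProjection M (T ↑y)) := fun y => rfl
    have hzero : ∀ z : M, T (z : F) = 0 → z = 0 := by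
      intro z hz
      have hz1 : (z : F) ∈ N := hz
      have hz2 : (z : F) ∈ Nᗮ := z.2
      have := inner_self_eq_zero.mp ((Submodule.mem_orthogonal N (z : F)).mp hz2 (z : F) hz1)
      exact Submodule.coe_eq_zero.mp this
    have hdec : ∀ z : F, z - ↑(orthogonalProjection M z) ∈ N := by
      intro z
      have := Submodule.sub_starProjection_mem_orthogonal (K := M) z
      rwa [hMN] at this
    have hc2' : ∀ y : M, T (T (y : F)) = T ↑(D y) := by
      intro y
      have hmem : T ↑y - ↑(D y) ∈ N := by
        rw [hDapply]
        exact hdec (T ↑y)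
      have h0 : T (T ↑y - ↑(D y)) = 0 := hmem
      rw [map_sub, sub_eq_zero] at h0
      exact h0
    have hc2 : ∀ (j : ℕ) (x : M), (T ^ (j + 1)) (x : F) = T ↑((D ^ j) x) := by
      intro j
      induction j with
      | zero =>
        intro x
        simp only [zero_add, pow_one, pow_zero, Module.End.one_apply]
      | succ j ihj =>
        intro x
        have e1 : (T ^ (j + 2)) (x : F) = T ((T ^ (j + 1)) (x : F)) := by
          rw [pow_succ' T (j + 1), Module.End.mul_apply]
        have e2 : (D ^ (j + 1)) x = D ((D ^ j) x) := by
          rw [pow_succ' D j, Module.End.mul_apply]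
        rw [e1, ihj x, hc2' ((D ^ j) x), e2]
    have hc3 : ∀ (j : ℕ) (x : M), (D ^ j) x = 0 ↔ (T ^ (j + 1)) (x : F) = 0 := by
      intro j x
      rw [hc2 j x]
      constructor
      · intro h
        rw [h]
        simp
      · intro h
        exact hzero _ h
    have hkerN : ∀ j : ℕ, N ≤ LinearMap.ker (T ^ (j + 1)) := by
      intro j x hx
      have hx' : T x = 0 := hx
      rw [LinearMap.mem_ker, pow_succ, Module.End.mul_apply, hx', map_zero]
    have hcOrth : ∀ (j : ℕ) (x : M),
        ((x : F) ∈ (LinearMap.ker (T ^ (j + 1)))ᗮ ↔ x ∈ (LinearMap.ker (D ^ j))ᗮ) := by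
      intro j x
      constructor
      · intro hx
        rw [Submodule.mem_orthogonal]
        intro y hy
        have hyk : (y : F) ∈ LinearMap.ker (T ^ (j + 1)) := by
          rw [LinearMap.mem_ker]
          exact (hc3 j y).mp hy
        have := (Submodule.mem_orthogonal _ _).mp hx (y : F) hyk
        rw [Submodule.coe_inner]
        exact this
      · intro hx
        rw [Submodule.mem_orthogonal]
        intro z hz
        have hzp : z - ↑(orthogonalProjection M z) ∈ N := hdec z
        have hp1 : (T ^ (j + 1)) ((orthogonalProjection M z : F)) = 0 := by
          have h5 : (T ^ (j + 1)) z = 0 := hz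
          have h6 : (T ^ (j + 1)) (z - ↑(orthogonalProjection M z)) = 0 := hkerN j hzp
          rw [map_sub, h5, zero_sub, neg_eq_zero] at h6
          exact h6
        have hpker : orthogonalProjection M z ∈ LinearMap.ker (D ^ j) :=
          LinearMap.mem_ker.mpr ((hc3 j _).mpr hp1)
        have e7 : (inner ℂ ((orthogonalProjection M z : F)) (x : F) : ℂ) = 0 := by
          have := (Submodule.mem_orthogonal _ _).mp hx _ hpker
          rw [Submodule.coe_inner] at this
          exact this
        have e8 : (inner ℂ (z - ↑(orthogonalProjection M z)) (x : F) : ℂ) =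
            0 := (Submodule.mem_orthogonal N _).mp x.2 _ hzp
        have e9 : (inner ℂ z (x : F) : ℂ) =
            inner ℂ ((z - ↑(orthogonalProjection M z)) + ↑(orthogonalProjection M z)) (x : F) := by
          rw [sub_add_cancel]
        rw [e9, inner_add_left, e7, e8, add_zero]
    have hcMem : ∀ j : ℕ, (LinearMap.ker (T ^ (j + 1)))ᗮ ≤ M :=
      fun j => Submodule.orthogonal_le (hkerN j)
    have hc5 : ∀ j : ℕ, LinPI (T ^ (j + 1)) ↔ LinPI (D ^ j) := by
      intro j
      constructor
      · intro hh x hx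
        have hx' : (x : F) ∈ (LinearMap.ker (T ^ (j + 1)))ᗮ := (hcOrth j x).mpr hx
        have h9 : ‖(T ^ (j + 1)) (x : F)‖ = ‖(x : F)‖ := hh _ hx'
        rw [hc2 j x] at h9
        calc ‖(D ^ j) x‖ = ‖(((D ^ j) x : M) : F)‖ := (Submodule.norm_coe _).symm
          _ = ‖T ↑((D ^ j) x)‖ := (hT _ ((D ^ j) x).2).symm
          _ = ‖(x : F)‖ := h9
          _ = ‖x‖ := Submodule.norm_coe _
      · intro hh z hz
        have hzM : z ∈ M := hcMem j hz
        have hx : (⟨z, hzM⟩ : M) ∈ (LinearMap.ker (D ^ j))ᗮ := (hcOrth j ⟨z, hzM⟩).mp hz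
        have h9 : ‖(D ^ j) (⟨z, hzM⟩ : M)‖ = ‖(⟨z, hzM⟩ : M)‖ := hh _ hx
        calc ‖(T ^ (j + 1)) z‖ = ‖T ↑((D ^ j) (⟨z, hzM⟩ : M))‖ := by rw [← hc2 j ⟨z, hzM⟩]
          _ = ‖(((D ^ j) (⟨z, hzM⟩ : M) : M) : F)‖ := hT _ ((D ^ j) (⟨z, hzM⟩ : M)).2
          _ = ‖(D ^ j) (⟨z, hzM⟩ : M)‖ := Submodule.norm_coe _
          _ = ‖(⟨z, hzM⟩ : M)‖ := h9
          _ = ‖z‖ := rfl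
    have hd1 : 0 < Module.finrank ℂ N := by
      rw [Module.finrank_pos_iff]
      exact Submodule.nontrivial_iff_ne_bot.mpr hNbot
    by_cases hd : 1 < Module.finrank ℂ N
    · -- apply induction hypothesis to the compression D
      have g1 : ∀ i ≤ s, LinPI (D ^ i) := fun i hi => (hc5 i).mp (h1 (i + 1) (by omega))
      have g2 : LinearMap.ker (D ^ (s + 1)) = LinearMap.ker (D ^ (s + 2)) := by
        ext x
        rw [LinearMap.mem_ker, LinearMap.mem_ker, hc3 (s + 1) x, hc3 (s + 2) x]
        constructor
        · intro hh
          have hmm : (x : F) ∈ LinearMap.ker (T ^ (s + 2)) := hh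
          rw [h2'] at hmm
          exact hmm
        · intro hh
          have hmm : (x : F) ∈ LinearMap.ker (T ^ (s + 3)) := hh
          rw [← h2'] at hmm
          exact hmm
      have g3 : LinearMap.ker (D ^ s) ≠ LinearMap.ker (D ^ (s + 1)) := by
        intro heq
        apply h3'
        refine le_antisymm (kerle T (s + 1)) ?_
        intro z hz
        have hp : (T ^ (s + 2)) ((orthogonalProjection M z : F)) = 0 := by
          have h5 : (T ^ (s + 2)) z = 0 := hz
          have h6 : (T ^ (s + 2)) (z - ↑(orthogonalProjection M z)) = 0 := hkerN (s + 1) (hdec z)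
          rw [map_sub, h5, zero_sub, neg_eq_zero] at h6
          exact h6
        have hD1 : (D ^ (s + 1)) (orthogonalProjection M z) = 0 := (hc3 (s + 1) _).mpr hp
        have hD0 : (D ^ s) (orthogonalProjection M z) = 0 := by
          have : orthogonalProjection M z ∈ LinearMap.ker (D ^ s) := by
            rw [heq]
            exact LinearMap.mem_ker.mpr hD1
          exact this
        have hTp : (T ^ (s + 1)) ((orthogonalProjection M z : F)) = 0 := (hc3 s _).mp hD0
        have hTz2 : (T ^ (s + 1)) (z - ↑(orthogonalProjection M z)) = 0 := hkerN s (hdec z)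
        rw [LinearMap.mem_ker]
        have e9 : z = (z - ↑(orthogonalProjection M z)) + ↑(orthogonalProjection M z) :=
          (sub_add_cancel z _).symm
        rw [e9, map_add, hTp, hTz2, add_zero]
      have g4 : ¬ LinPI (D ^ (s + 1)) := fun hh => h4' ((hc5 (s + 1)).mpr hh)
      have hIH := IH M D g1 g2 g3 g4
      have hrank : Module.finrank ℂ N + Module.finrank ℂ M = Module.finrank ℂ F :=
        N.finrank_add_finrank_orthogonal
      omega
    · -- dim ker T = 1 : T^(s+2) is automatically a partial isometry, contradiction
      have hd1' : Module.finrank ℂ N = 1 := by omega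
      exfalso
      apply h4'
      have hlt : LinearMap.ker (T ^ (s + 1)) < LinearMap.ker (T ^ (s + 2)) :=
        lt_of_le_of_ne (kerle T (s + 1)) h3'
      obtain ⟨z, hz2, hz1⟩ := SetLike.exists_of_lt hlt
      set Nt := LinearMap.ker (T ^ (s + 1)) with hNt
      set w : F := z - ↑(orthogonalProjection Nt z) with hw
      have hwperp : w ∈ Ntᗮ := Submodule.sub_starProjection_mem_orthogonal z
      have hwK : (T ^ (s + 2)) w = 0 := by
        have hm : w ∈ LinearMap.ker (T ^ (s + 2)) := by
          refine Submodule.sub_mem _ hz2 ?_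
          exact kerle T (s + 1) (orthogonalProjection Nt z).2
        exact hm
      have hwne : (T ^ (s + 1)) w ≠ 0 := by
        intro h0
        have hwNt : w ∈ Nt := LinearMap.mem_ker.mpr h0
        have hw0 : w = 0 :=
          inner_self_eq_zero.mp ((Submodule.mem_orthogonal Nt w).mp hwperp w hwNt)
        apply hz1
        rw [hw, sub_eq_zero] at hw0
        rw [hw0]
        exact (orthogonalProjection Nt z).2
      have hBwN : (T ^ (s + 1)) w ∈ N := by
        have e1 : T ((T ^ (s + 1)) w) = (T ^ (s + 2)) w := by
          rw [pow_succ' T (s + 1), Module.End.mul_apply]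
        exact LinearMap.mem_ker.mpr (e1.trans hwK)
      have hspan : Submodule.span ℂ ({(T ^ (s + 1)) w} : Set F) = N := by
        apply Submodule.eq_of_le_of_finrank_le
        · rw [Submodule.span_le, Set.singleton_subset_iff]
          exact hBwN
        · rw [finrank_span_singleton hwne, hd1']
      have hfiso : ∀ u : (Ntᗮ : Submodule ℂ F),
          ‖((T ^ (s + 1)) ∘ₗ (Ntᗮ : Submodule ℂ F).subtype) u‖ = ‖u‖ := by
        intro u
        calc ‖((T ^ (s + 1)) ∘ₗ (Ntᗮ : Submodule ℂ F).subtype) u‖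
            = ‖(T ^ (s + 1)) (u : F)‖ := rfl
          _ = ‖(u : F)‖ := h1 (s + 1) le_rfl (u : F) u.2
          _ = ‖u‖ := Submodule.norm_coe u
      intro x hx
      have hx' : x ∈ (LinearMap.ker (T ^ (s + 2)))ᗮ := hx
      have hxMt : x ∈ Ntᗮ := Submodule.orthogonal_le (kerle T (s + 1)) hx'
      have hinner : (inner ℂ ((T ^ (s + 1)) w) ((T ^ (s + 1)) x) : ℂ) = 0 := by
        have h5 := LinearIsometry.inner_map_map
          (⟨(T ^ (s + 1)) ∘ₗ (Ntᗮ : Submodule ℂ F).subtype, hfiso⟩ :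
            (Ntᗮ : Submodule ℂ F) →ₗᵢ[ℂ] F)
          (⟨w, hwperp⟩ : (Ntᗮ : Submodule ℂ F)) (⟨x, hxMt⟩ : (Ntᗮ : Submodule ℂ F))
        have h7 : (inner ℂ w x : ℂ) = 0 :=
          (Submodule.mem_orthogonal _ x).mp hx' w (LinearMap.mem_ker.mpr hwK)
        calc (inner ℂ ((T ^ (s + 1)) w) ((T ^ (s + 1)) x) : ℂ)
            = inner ℂ (⟨w, hwperp⟩ : (Ntᗮ : Submodule ℂ F)) (⟨x, hxMt⟩ : (Ntᗮ : Submodule ℂ F)) :=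
              h5
          _ = inner ℂ w x := Submodule.coe_inner _ _ _
          _ = 0 := h7
      have hBxN : (T ^ (s + 1)) x ∈ Nᗮ := by
        rw [Submodule.mem_orthogonal]
        intro u hu
        rw [← hspan, Submodule.mem_span_singleton] at hu
        obtain ⟨c, rfl⟩ := hu
        rw [inner_smul_left, hinner, mul_zero]
      show ‖(T ^ (s + 2)) x‖ = ‖x‖
      have e1 : (T ^ (s + 2)) x = T ((T ^ (s + 1)) x) := by
        rw [pow_succ' T (s + 1), Module.End.mul_apply]
      rw [e1]
      calc ‖T ((T ^ (s + 1)) x)‖ = ‖(T ^ (s + 1)) x‖ := hT _ hBxN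
        _ = ‖x‖ := h1 (s + 1) le_rfl x hxMt

end ClaimL

section Main

open LinearMap Submodule Module

private lemma toEuclideanLin_mul {n : ℕ} (B C : Matrix (Fin n) (Fin n) ℂ) :
    Matrix.toEuclideanLin (B * C) = (Matrix.toEuclideanLin B) ∘ₗ (Matrix.toEuclideanLin C) := by
  refine LinearMap.ext fun x => ?_
  apply (WithLp.equiv 2 _).injective
  simp [Matrix.ofLp_toEuclideanLin_apply, Matrix.toLin'_mul]

private lemma toEuclideanLin_pow {n : ℕ} (A : Matrix (Fin n) (Fin n) ℂ) (i : ℕ) :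
    Matrix.toEuclideanLin (A ^ i) = (Matrix.toEuclideanLin A) ^ i := by
  induction i with
  | zero =>
    rw [pow_zero, pow_zero]
    refine LinearMap.ext fun x => ?_
    apply (WithLp.equiv 2 _).injective
    simp [Matrix.ofLp_toEuclideanLin_apply]
  | succ i ih =>
    rw [pow_succ, pow_succ, toEuclideanLin_mul, ih, Module.End.mul_eq_comp]

/-- **Lemma 3.3 (b).** If `A` is an `n`-by-`n` complex matrix with `p(A)` finite and
`p(A) + a(A) = n`, then `p(A) = a(A)` or `p(A) ≤ a(A) - 2`. -/
theorem pIndex_eq_or_le_of_add_eq (n : ℕ) (A : Matrix (Fin n) (Fin n) ℂ)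
    (hfin : A.pIndex ≠ ⊤) (h : A.pIndex + (A.ascent : ℕ∞) = (n : ℕ∞)) :
    A.pIndex = (A.ascent : ℕ∞) ∨ A.pIndex + 2 ≤ (A.ascent : ℕ∞) := by
  classical
  set T : EuclideanSpace ℂ (Fin n) →ₗ[ℂ] EuclideanSpace ℂ (Fin n) := Matrix.toEuclideanLin A
    with hTdef
  have hPIiff : ∀ i : ℕ, (A ^ i).IsPartialIsometry ↔ LinPI (T ^ i) := by
    intro i
    unfold Matrix.IsPartialIsometry LinPI
    rw [toEuclideanLin_pow A i]
  set S := {j : ℕ | ∀ i ≤ j, (A ^ i).IsPartialIsometry} with hS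
  have h0S : 0 ∈ S := by
    intro i hi
    obtain rfl : i = 0 := Nat.le_zero.mp hi
    rw [hPIiff 0, pow_zero]
    intro x _
    rw [Module.End.one_apply]
  obtain ⟨k, hk⟩ : ∃ k : ℕ, A.pIndex = (k : ℕ∞) := by
    obtain ⟨k, hk⟩ := WithTop.ne_top_iff_exists.mp hfin
    exact ⟨k, hk.symm⟩
  have hbddS : ∀ j ∈ S, j ≤ k := by
    intro j hj
    have h1 : (j : ℕ∞) ≤ A.pIndex := le_sSup ⟨j, hj, rfl⟩
    rw [hk] at h1
    exact_mod_cast h1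
  have hkS : k ∈ S := by
    have hfin' : (((↑) '' S) : Set ℕ∞).Finite := by
      refine ((Set.finite_Iic k).image ((↑) : ℕ → ℕ∞)).subset ?_
      rintro x ⟨j, hj, rfl⟩
      exact ⟨j, hbddS j hj, rfl⟩
    have hne : (((↑) '' S) : Set ℕ∞).Nonempty := ⟨(0 : ℕ∞), ⟨0, h0S, rfl⟩⟩
    have hmem := hne.csSup_mem hfin'
    have he : sSup (((↑) '' S) : Set ℕ∞) = (k : ℕ∞) := hk ▸ rfl
    rw [he] at hmem
    obtain ⟨j, hjS, hjk⟩ := hmem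
    obtain rfl : j = k := by exact_mod_cast hjk
    exact hjS
  have hknot : ¬ (A ^ (k + 1)).IsPartialIsometry := by
    intro hpi
    have hk1S : (k + 1) ∈ S := by
      intro i hi
      rcases Nat.lt_or_ge i (k + 1) with h' | h'
      · exact hkS i (by omega)
      · obtain rfl : i = k + 1 := by omega
        exact hpi
    have := hbddS _ hk1S
    omega
  have hkpiL : ∀ i ≤ k, LinPI (T ^ i) := fun i hi => (hPIiff i).mp (hkS i hi)
  have hknotL : ¬ LinPI (T ^ (k + 1)) := fun hh => hknot ((hPIiff _).mpr hh)
  -- ascent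
  have hascne : {m : ℕ | LinearMap.ker (Matrix.toEuclideanLin (A ^ m)) =
      LinearMap.ker (Matrix.toEuclideanLin (A ^ (m + 1)))}.Nonempty := by
    refine ⟨Module.finrank ℂ (EuclideanSpace ℂ (Fin n)), ?_⟩
    show LinearMap.ker (Matrix.toEuclideanLin
      (A ^ Module.finrank ℂ (EuclideanSpace ℂ (Fin n)))) = _
    rw [toEuclideanLin_pow, toEuclideanLin_pow]
    exact (Module.End.ker_pow_eq_ker_pow_finrank_of_le (Nat.le_succ _)).symm
  have haMem : LinearMap.ker (T ^ A.ascent) = LinearMap.ker (T ^ (A.ascent + 1)) := by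
    have h1 := Nat.sInf_mem hascne
    have h2 : LinearMap.ker (Matrix.toEuclideanLin (A ^ A.ascent)) =
        LinearMap.ker (Matrix.toEuclideanLin (A ^ (A.ascent + 1))) := h1
    rwa [toEuclideanLin_pow, toEuclideanLin_pow] at h2
  have haMin : ∀ j : ℕ, LinearMap.ker (T ^ j) = LinearMap.ker (T ^ (j + 1)) → A.ascent ≤ j := by
    intro j hj
    apply Nat.sInf_le
    show LinearMap.ker (Matrix.toEuclideanLin (A ^ j)) =
      LinearMap.ker (Matrix.toEuclideanLin (A ^ (j + 1)))
    rwa [toEuclideanLin_pow, toEuclideanLin_pow]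
  have hn : k + A.ascent = n := by
    rw [hk] at h
    exact_mod_cast h
  have hka : k ≤ A.ascent := by
    by_contra hlt
    push_neg at hlt
    have hall := claim1 T A.ascent (fun i hi => hkpiL i (by omega)) haMem
    exact hknotL (hall (k + 1))
  have htri : k = A.ascent ∨ k + 2 ≤ A.ascent ∨ k + 1 = A.ascent := by omega
  rcases htri with h' | h' | h'
  · left
    rw [hk, h']
  · right
    rw [hk]
    have : ((k + 2 : ℕ) : ℕ∞) ≤ ((A.ascent : ℕ) : ℕ∞) := by exact_mod_cast h'
    calc (k : ℕ∞) + 2 = ((k + 2 : ℕ) : ℕ∞) := by push_cast; ring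
      _ ≤ (A.ascent : ℕ∞) := this
  · exfalso
    have h2 : LinearMap.ker (T ^ (k + 1)) = LinearMap.ker (T ^ (k + 2)) := by
      have := haMem
      rw [← h'] at this
      exact this
    have h3 : LinearMap.ker (T ^ k) ≠ LinearMap.ker (T ^ (k + 1)) := by
      intro heq
      have := haMin k heq
      omega
    have hL := claimL k (EuclideanSpace ℂ (Fin n)) T hkpiL h2 h3 hknotL
    rw [finrank_euclideanSpace_fin] at hL
    omega

end Main

end
end

section
/- Let A be an n-by-n complex matrix and 1 ≤ j ≤ a(A). Then A, A², …, A^j are all partial isometries if and only if there exist positive integers n₁, …, n_j and a nonnegative integer m with n₁ + ⋯ + n_j + m = n, matrices A_ℓ of size n_ℓ-by-n_{ℓ+1} (1 ≤ ℓ ≤ j − 1) with A_ℓ*A_ℓ = I_{n_{ℓ+1}}, an n_j-by-m matrix B and an m-by-m matrix C with B*B + C*C = I_m, such that A is unitarily similar to the block matrix A′ on ℂ^{n₁} ⊕ ⋯ ⊕ ℂ^{n_j} ⊕ ℂ^m whose (ℓ, ℓ+1) block is A_ℓ for 1 ≤ ℓ ≤ j − 1, whose (j, j+1) block is B, whose (j+1,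 j+1) block is C, and all of whose other blocks are zero. Moreover, in this case n₁ = dim ker A, n_ℓ = dim ker A^ℓ − dim ker A^{ℓ−1} for 2 ≤ ℓ ≤ j, and m = rank A^j. -/
open Matrix

noncomputable section

open Module

namespace PPI

local notation "⟪" x ", " y "⟫" => @inner ℂ _ _ x y

section Abstract

variable {E : Type*} [NormedAddCommGroup E] [InnerProductSpace ℂ E] [FiniteDimensional ℂ E]

/-- abstract partial isometry -/
def PI (T : E →ₗ[ℂ] E) : Prop := ∀ x ∈ (LinearMap.ker T)ᗮ, ‖T x‖ = ‖x‖

lemma inner_map_map_of_norm_map {E F : Type*} [NormedAddCommGroup E] [InnerProductSpace ℂ E]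
    [NormedAddCommGroup F] [InnerProductSpace ℂ F]
    (T : E →ₗ[ℂ] F) (S : Submodule ℂ E) (hn : ∀ x ∈ S, ‖T x‖ = ‖x‖)
    {x y : E} (hx : x ∈ S) (hy : y ∈ S) : ⟪T x, T y⟫ = ⟪x, y⟫ := by
  have hS := LinearIsometry.inner_map_map
    (⟨T.comp (Submodule.subtype S), fun v => hn v v.2⟩ : S →ₗᵢ[ℂ] F)
    ⟨x, hx⟩ ⟨y, hy⟩
  exact hS

lemma PI.adjoint_apply {T : E →ₗ[ℂ] E} (h : PI T)
    {x : E} (hx : x ∈ (LinearMap.ker T)ᗮ) :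
    LinearMap.adjoint T (T x) = x := by
  have key : ∀ z, ⟪LinearMap.adjoint T (T x), z⟫ = ⟪x, z⟫ := by
    intro z
    obtain ⟨z₁, hz₁, z₂, hz₂, rfl⟩ :=
      Submodule.exists_add_mem_mem_orthogonal (K := LinearMap.ker T) z
    have hinner : ⟪T x, T z₂⟫ = ⟪x, z₂⟫ :=
      inner_map_map_of_norm_map T _ h hx hz₂
    have h1 : ⟪LinearMap.adjoint T (T x), z₁⟫ = 0 := by
      rw [LinearMap.adjoint_inner_left, LinearMap.mem_ker.mp hz₁, inner_zero_right]
    have h2 : ⟪LinearMap.adjoint T (T x), z₂⟫ = ⟪x, z₂⟫ := by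
      rw [LinearMap.adjoint_inner_left]; exact hinner
    have hx1 : ⟪x, z₁⟫ = 0 := (Submodule.mem_orthogonal' _ _).mp hx z₁ hz₁
    rw [inner_add_right, inner_add_right, h1, h2, hx1]
  exact ext_inner_right ℂ key

lemma PI.inner_map_map {T : E →ₗ[ℂ] E} (h : PI T)
    {x y : E} (hx : x ∈ (LinearMap.ker T)ᗮ) (hy : y ∈ (LinearMap.ker T)ᗮ) :
    ⟪T x, T y⟫ = ⟪x, y⟫ :=
  inner_map_map_of_norm_map T _ h hx hy

lemma pi_iff_triple (T : E →ₗ[ℂ] E) :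
    PI T ↔ T ∘ₗ LinearMap.adjoint T ∘ₗ T = T := by
  constructor
  · intro h
    ext x
    obtain ⟨z₁, hz₁, z₂, hz₂, rfl⟩ :=
      Submodule.exists_add_mem_mem_orthogonal (K := LinearMap.ker T) x
    have h1 : T z₁ = 0 := LinearMap.mem_ker.mp hz₁
    simp only [LinearMap.comp_apply, map_add, h1, zero_add, map_zero]
    rw [h.adjoint_apply hz₂]
  · intro h x hx
    have htriple : ∀ y, T (LinearMap.adjoint T (T y)) = T y := fun y => by
      simpa using LinearMap.ext_iff.mp h y
    have hsub : LinearMap.adjoint T (T x) = x := by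
      have h1 : LinearMap.adjoint T (T x) - x ∈ LinearMap.ker T := by
        rw [LinearMap.mem_ker, map_sub, htriple, sub_self]
      have h2 : LinearMap.adjoint T (T x) - x ∈ (LinearMap.ker T)ᗮ := by
        refine Submodule.sub_mem _ ?_ hx
        rw [Submodule.mem_orthogonal]
        intro z hz
        rw [LinearMap.adjoint_inner_right, LinearMap.mem_ker.mp hz, inner_zero_left]
      exact sub_eq_zero.mp
        (Submodule.disjoint_def.mp (Submodule.orthogonal_disjoint _) _ h1 h2)
    have hnorm : ⟪T x, T x⟫ = ⟪x, x⟫ := by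
      rw [← LinearMap.adjoint_inner_left, hsub]
    rw [inner_self_eq_norm_sq_to_K, inner_self_eq_norm_sq_to_K] at hnorm
    have h5 : ‖T x‖ ^ 2 = ‖x‖ ^ 2 := by exact_mod_cast hnorm
    nlinarith [norm_nonneg (T x), norm_nonneg x]

end Abstract

section MatrixBasics

variable {ι κ ι₁ ι₂ ι₃ : Type*} [Fintype ι] [DecidableEq ι] [Fintype κ] [DecidableEq κ]
  [Fintype ι₁] [DecidableEq ι₁] [Fintype ι₂] [DecidableEq ι₂] [Fintype ι₃] [DecidableEq ι₃]

lemma toEL_mul (M : Matrix ι₁ ι₂ ℂ) (N : Matrix ι₂ ι₃ ℂ) :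
    Matrix.toEuclideanLin (M * N) =
      (Matrix.toEuclideanLin M) ∘ₗ (Matrix.toEuclideanLin N) := by
  simp only [Matrix.toEuclideanLin_eq_toLin]
  rw [Matrix.toLin_mul _ (PiLp.basisFun 2 ℂ ι₂)]

lemma toEL_one : Matrix.toEuclideanLin (1 : Matrix ι ι ℂ) = LinearMap.id := by
  rw [Matrix.toEuclideanLin_eq_toLin, Matrix.toLin_one]

lemma toEL_pow (A : Matrix ι ι ℂ) (i : ℕ) :
    Matrix.toEuclideanLin (A ^ i) = (Matrix.toEuclideanLin A) ^ i := by
  induction i with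
  | zero => simp [toEL_one, Module.End.one_eq_id]
  | succ k ih =>
      rw [pow_succ, toEL_mul, ih, pow_succ]
      rfl

lemma isPartialIsometry_iff_pi (M : Matrix ι ι ℂ) :
    M.IsPartialIsometry ↔ PI (Matrix.toEuclideanLin M) := Iff.rfl

lemma isPartialIsometry_iff_triple (M : Matrix ι ι ℂ) :
    M.IsPartialIsometry ↔ M * Mᴴ * M = M := by
  rw [isPartialIsometry_iff_pi, pi_iff_triple]
  constructor
  · intro h
    apply Matrix.toEuclideanLin.injective
    rw [toEL_mul, toEL_mul, Matrix.toEuclideanLin_conjTranspose_eq_adjoint]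
    exact h
  · intro h
    rw [← Matrix.toEuclideanLin_conjTranspose_eq_adjoint, ← toEL_mul, ← toEL_mul,
      ← mul_assoc, h]

lemma unitarilySimilarTo_pow {A : Matrix ι ι ℂ} {A' : Matrix κ κ ℂ}
    (U : Matrix ι κ ℂ) (hU1 : Uᴴ * U = 1) (hU2 : U * Uᴴ = 1) (hAA : A' = Uᴴ * A * U)
    (i : ℕ) : A' ^ i = Uᴴ * (A ^ i) * U := by
  induction i with
  | zero => simp [hU1]
  | succ k ih =>
      rw [pow_succ, ih, hAA, pow_succ]
      simp only [Matrix.mul_assoc]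
      rw [← Matrix.mul_assoc U Uᴴ, hU2, Matrix.one_mul]

lemma triple_of_triple {A : Matrix ι ι ℂ} {A' : Matrix κ κ ℂ}
    (U : Matrix ι κ ℂ) (hU2 : U * Uᴴ = 1) (hAA : A' = Uᴴ * A * U)
    (h : A * Aᴴ * A = A) : A' * A'ᴴ * A' = A' := by
  subst hAA
  have hct : (Uᴴ * A * U)ᴴ = Uᴴ * Aᴴ * U := by
    simp [Matrix.conjTranspose_mul, Matrix.mul_assoc]
  rw [hct]
  simp only [Matrix.mul_assoc]
  rw [← Matrix.mul_assoc U Uᴴ, hU2, Matrix.one_mul]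
  rw [← Matrix.mul_assoc U Uᴴ, hU2, Matrix.one_mul]
  rw [← Matrix.mul_assoc Aᴴ A U, ← Matrix.mul_assoc A (Aᴴ * A) U,
    ← Matrix.mul_assoc A Aᴴ A, h]

lemma unitarilySimilarTo_isPartialIsometry {A : Matrix ι ι ℂ} {A' : Matrix κ κ ℂ}
    (U : Matrix ι κ ℂ) (hU1 : Uᴴ * U = 1) (hU2 : U * Uᴴ = 1) (hAA : A' = Uᴴ * A * U) :
    (A.IsPartialIsometry ↔ A'.IsPartialIsometry) := by
  rw [isPartialIsometry_iff_triple, isPartialIsometry_iff_triple]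
  have hA : A = Uᴴᴴ * A' * Uᴴ := by
    rw [hAA, Matrix.conjTranspose_conjTranspose]
    simp only [Matrix.mul_assoc]
    rw [hU2, Matrix.mul_one, ← Matrix.mul_assoc U Uᴴ, hU2, Matrix.one_mul]
  constructor
  · exact fun h => triple_of_triple U hU2 hAA h
  · intro h
    exact triple_of_triple Uᴴ (by rwa [Matrix.conjTranspose_conjTranspose]) hA h

end MatrixBasics

section Transport

open Module

variable {ι κ : Type*} [Fintype ι] [DecidableEq ι] [Fintype κ] [DecidableEq κ]

/-- the linear equivalence coming from a (possibly rectangular) unitary -/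
def unitaryEquiv (U : Matrix ι κ ℂ) (hU1 : Uᴴ * U = 1) (hU2 : U * Uᴴ = 1) :
    EuclideanSpace ℂ κ ≃ₗ[ℂ] EuclideanSpace ℂ ι :=
  LinearEquiv.ofLinear (Matrix.toEuclideanLin U) (Matrix.toEuclideanLin Uᴴ)
    (by rw [← toEL_mul, hU2, toEL_one]) (by rw [← toEL_mul, hU1, toEL_one])

lemma finrank_ker_unitary {A : Matrix ι ι ℂ} {A' : Matrix κ κ ℂ}
    (U : Matrix ι κ ℂ) (hU1 : Uᴴ * U = 1) (hU2 : U * Uᴴ = 1) (hAA : A' = Uᴴ * A * U) :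
    finrank ℂ (LinearMap.ker (Matrix.toEuclideanLin A')) =
      finrank ℂ (LinearMap.ker (Matrix.toEuclideanLin A)) := by
  have hker : LinearMap.ker (Matrix.toEuclideanLin A') =
      Submodule.comap ((unitaryEquiv U hU1 hU2 : EuclideanSpace ℂ κ ≃ₗ[ℂ] EuclideanSpace ℂ ι) :
        EuclideanSpace ℂ κ →ₗ[ℂ] EuclideanSpace ℂ ι) (LinearMap.ker (Matrix.toEuclideanLin A)) := by
    rw [hAA, toEL_mul, toEL_mul, LinearMap.comp_assoc, LinearMap.ker_comp]
    have hinj : LinearMap.ker (Matrix.toEuclideanLin Uᴴ) = ⊥ := by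
      rw [LinearMap.ker_eq_bot]
      intro a b hab
      have := congrArg (Matrix.toEuclideanLin U) hab
      have h2 : (Matrix.toEuclideanLin U ∘ₗ Matrix.toEuclideanLin Uᴴ) a =
          (Matrix.toEuclideanLin U ∘ₗ Matrix.toEuclideanLin Uᴴ) b := this
      rwa [← toEL_mul, hU2, toEL_one, LinearMap.id_apply, LinearMap.id_apply] at h2
    rw [hinj, Submodule.comap_bot, LinearMap.ker_comp]
    rfl
  rw [hker, Submodule.comap_equiv_eq_map_symm, LinearEquiv.finrank_map_eq]

lemma rank_unitary {A : Matrix ι ι ℂ} {A' : Matrix κ κ ℂ}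
    (U : Matrix ι κ ℂ) (hU1 : Uᴴ * U = 1) (hU2 : U * Uᴴ = 1) (hAA : A' = Uᴴ * A * U) :
    A'.rank = A.rank := by
  have hA : A = Uᴴᴴ * A' * Uᴴ := by
    rw [hAA, Matrix.conjTranspose_conjTranspose]
    simp only [Matrix.mul_assoc]
    rw [hU2, Matrix.mul_one, ← Matrix.mul_assoc U Uᴴ, hU2, Matrix.one_mul]
  apply le_antisymm
  · rw [hAA]
    exact le_trans (Matrix.rank_mul_le_left _ _) (Matrix.rank_mul_le_right _ _)
  · conv_lhs => rw [hA]
    exact le_trans (Matrix.rank_mul_le_left _ _) (Matrix.rank_mul_le_right _ _)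

lemma rank_toEL (M : Matrix ι ι ℂ) :
    M.rank = finrank ℂ (LinearMap.range (Matrix.toEuclideanLin M)) := by
  rw [Matrix.toEuclideanLin_eq_toLin]
  exact Matrix.rank_eq_finrank_range_toLin M (PiLp.basisFun 2 ℂ ι) (PiLp.basisFun 2 ℂ ι)

lemma rank_add_finrank_ker (M : Matrix ι ι ℂ) :
    M.rank + finrank ℂ (LinearMap.ker (Matrix.toEuclideanLin M)) = Fintype.card ι := by
  rw [rank_toEL]
  rw [LinearMap.finrank_range_add_finrank_ker (Matrix.toEuclideanLin M)]
  simp [finrank_euclideanSpace]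

end Transport

section CoordKer

variable {κ : Type*} [Fintype κ] [DecidableEq κ]


/-- coordinate subspace: vectors vanishing on `P` -/
def coordKer (P : κ → Prop) [DecidablePred P] : Submodule ℂ (EuclideanSpace ℂ κ) where
  carrier := {x | ∀ q, P q → x q = 0}
  add_mem' := fun {a b} ha hb q hq => by
    have : (a + b) q = a q + b q := rfl
    rw [this, ha q hq, hb q hq, add_zero]
  zero_mem' := fun q _ => rfl
  smul_mem' := fun c {x} hx q hq => by
    have : (c • x) q = c * x q := rfl
    rw [this, hx q hq, mul_zero]

lemma mem_coordKer {P : κ → Prop} [DecidablePred P] {x : EuclideanSpace ℂ κ} :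
    x ∈ coordKer P ↔ ∀ q, P q → x q = 0 := Iff.rfl

lemma coordKer_orthogonal (P : κ → Prop) [DecidablePred P] :
    (coordKer P)ᗮ = coordKer (fun q => ¬ P q) := by
  ext x
  constructor
  · intro hx q hq
    have hy : EuclideanSpace.single q (1 : ℂ) ∈ coordKer P := by
      intro q' hq'
      rw [EuclideanSpace.single_apply]
      have : q' ≠ q := fun h => hq (h ▸ hq')
      simp [this]
    have h0 := (Submodule.mem_orthogonal _ _).mp hx _ hy
    rw [EuclideanSpace.inner_single_left] at h0
    simpa using h0
  · intro hx
    rw [Submodule.mem_orthogonal]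
    intro y hy
    rw [PiLp.inner_apply]
    apply Finset.sum_eq_zero
    intro q _
    by_cases h : P q
    · rw [hy q h]
      simp
    · rw [hx q h]
      simp [RCLike.inner_apply]

/-- linear equivalence with functions on the complement -/
def coordKerEquiv (P : κ → Prop) [DecidablePred P] :
    coordKer P ≃ₗ[ℂ] ({q : κ // ¬ P q} → ℂ) where
  toFun x q := x.1 q.1
  map_add' x y := rfl
  map_smul' c x := rfl
  invFun f := ⟨WithLp.toLp 2 (fun q => if h : ¬ P q then f ⟨q, h⟩ else 0), by
    intro q hq
    simp [hq]⟩
  left_inv x := by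
    apply Subtype.ext
    ext q
    by_cases h : P q
    · simp [h, x.2 q h]
    · simp [h]
  right_inv f := by
    funext q
    simp [q.2]

lemma finrank_coordKer (P : κ → Prop) [DecidablePred P] :
    finrank ℂ (coordKer P) = Fintype.card {q : κ // ¬ P q} := by
  rw [LinearEquiv.finrank_eq (coordKerEquiv P), finrank_fintype_fun_eq_card]

end CoordKer

section Block

variable {j : ℕ} {ns : Fin j → ℕ} {m : ℕ}

/-- index type of the block decomposition -/
abbrev BIdx (ns : Fin j → ℕ) (m : ℕ) : Type := (Σ ℓ : Fin j, Fin (ns ℓ)) ⊕ Fin m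

/-- the "slot" of an index -/
def slot : BIdx ns m → ℕ
  | Sum.inl p => p.1
  | Sum.inr _ => j

lemma slot_le (q : BIdx ns m) : slot q ≤ j := by
  cases q with
  | inl p => exact le_of_lt p.1.isLt
  | inr _ => exact le_refl j


variable (hj : 0 < j) (A' : Matrix (BIdx ns m) (BIdx ns m) ℂ)

section withHyps

variable
 (hz1 : ∀ (ℓ ℓ' : Fin j) (a : Fin (ns ℓ)) (b : Fin (ns ℓ')), (ℓ' : ℕ) ≠ (ℓ : ℕ) + 1 →
    A' (Sum.inl ⟨ℓ, a⟩) (Sum.inl ⟨ℓ', b⟩) = 0)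
 (hz2 : ∀ (ℓ : Fin j), (ℓ : ℕ) ≠ j - 1 → ∀ (a : Fin (ns ℓ)) (b : Fin m),
    A' (Sum.inl ⟨ℓ, a⟩) (Sum.inr b) = 0)
 (hz3 : ∀ (a : Fin m) (ℓ : Fin j) (b : Fin (ns ℓ)), A' (Sum.inr a) (Sum.inl ⟨ℓ, b⟩) = 0)
 (hc1 : ∀ (ℓ s : Fin j), (s : ℕ) = (ℓ : ℕ) + 1 → ∀ (b b' : Fin (ns s)),
    (∑ a, star (A' (Sum.inl ⟨ℓ, a⟩) (Sum.inl ⟨s, b⟩)) * A' (Sum.inl ⟨ℓ, a⟩) (Sum.inl ⟨s, b'⟩))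
      = if b = b' then 1 else 0)
 (hc2 : ∀ (b b' : Fin m),
    ((∑ ℓ : Fin j, ∑ a, star (A' (Sum.inl ⟨ℓ, a⟩) (Sum.inr b)) *
       A' (Sum.inl ⟨ℓ, a⟩) (Sum.inr b')) +
     (∑ a, star (A' (Sum.inr a) (Sum.inr b)) * A' (Sum.inr a) (Sum.inr b')))
      = if b = b' then 1 else 0)

include hz1 hz3 in
lemma col_slot_zero {q : BIdx ns m} (hq : slot q = 0) (hq0 : 0 < j) (p : BIdx ns m) :
    A' p q = 0 := by
  cases q with
  | inl sb =>
    obtain ⟨s, b⟩ := sb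
    cases p with
    | inl ta =>
      obtain ⟨t, a⟩ := ta
      exact hz1 t s a b (by simp only [slot] at hq; omega)
    | inr a => exact hz3 a s b
  | inr b => simp only [slot] at hq; omega

include hj hz1 hz2 hz3 hc1 hc2 in
lemma gram_entry (q q' : BIdx ns m) :
    (A'ᴴ * A') q q' = if q = q' ∧ 1 ≤ slot q then 1 else 0 := by
  rw [Matrix.mul_apply]
  simp only [Matrix.conjTranspose_apply]
  rw [Fintype.sum_sum_type]
  rw [← Finset.univ_sigma_univ, Finset.sum_sigma]
  rcases q with ⟨s, b⟩ | b <;> rcases q' with ⟨s', b'⟩ | b'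
  · -- inl / inl
    have hinr : (∑ a : Fin m, star (A' (Sum.inr a) (Sum.inl ⟨s, b⟩)) *
        A' (Sum.inr a) (Sum.inl ⟨s', b'⟩)) = 0 :=
      Finset.sum_eq_zero fun a _ => by rw [hz3]; simp
    rw [hinr, add_zero]
    by_cases hs : (s : ℕ) = 0
    · have hall : (∑ ℓ : Fin j, ∑ a : Fin (ns ℓ),
          star (A' (Sum.inl ⟨ℓ, a⟩) (Sum.inl ⟨s, b⟩)) *
            A' (Sum.inl ⟨ℓ, a⟩) (Sum.inl ⟨s', b'⟩)) = 0 := by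
        apply Finset.sum_eq_zero; intro ℓ _
        apply Finset.sum_eq_zero; intro a _
        rw [hz1 ℓ s a b (by omega)]; simp
      rw [hall]
      have : ¬ (1 ≤ slot (Sum.inl ⟨s, b⟩ : BIdx ns m)) := by
        simp only [slot]; omega
      simp [this]
    · by_cases hss : s = s'
      · subst hss
        have hs1 : 1 ≤ (s : ℕ) := by omega
        have hlt : (s : ℕ) - 1 < j := by have := s.isLt; omega
        rw [Finset.sum_eq_single (⟨(s : ℕ) - 1, hlt⟩ : Fin j)]
        · rw [hc1 ⟨(s : ℕ) - 1, hlt⟩ s (by show (s : ℕ) = (s : ℕ) - 1 + 1; omega) b b']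
          have hsl : ∀ c : Fin (ns s), 1 ≤ slot (Sum.inl ⟨s, c⟩ : BIdx ns m) := fun c => by
            simp only [slot]; omega
          by_cases hbb : b = b' <;> simp [hbb, hsl]
        · intro ℓ _ hℓ
          apply Finset.sum_eq_zero; intro a _
          have : (s : ℕ) ≠ (ℓ : ℕ) + 1 := by
            intro hc
            exact hℓ (Fin.ext (by show (ℓ : ℕ) = (s : ℕ) - 1; omega))
          rw [hz1 ℓ s a b this]; simp
        · intro h; exact absurd (Finset.mem_univ _) h
      · have hall : (∑ ℓ : Fin j, ∑ a : Fin (ns ℓ),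
            star (A' (Sum.inl ⟨ℓ, a⟩) (Sum.inl ⟨s, b⟩)) *
              A' (Sum.inl ⟨ℓ, a⟩) (Sum.inl ⟨s', b'⟩)) = 0 := by
          apply Finset.sum_eq_zero; intro ℓ _
          apply Finset.sum_eq_zero; intro a _
          by_cases h1 : (s : ℕ) = (ℓ : ℕ) + 1
          · have h2 : (s' : ℕ) ≠ (ℓ : ℕ) + 1 := by
              intro hc
              exact hss (Fin.ext (by omega))
            rw [hz1 ℓ s' a b' h2]; simp
          · rw [hz1 ℓ s a b h1]; simp
        rw [hall]
        have : (Sum.inl ⟨s, b⟩ : BIdx ns m) ≠ Sum.inl ⟨s', b'⟩ := by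
          intro hc
          apply hss
          have := Sum.inl.inj hc
          exact congrArg Sigma.fst this
        simp [this]
  · -- inl / inr
    have hinr : (∑ a : Fin m, star (A' (Sum.inr a) (Sum.inl ⟨s, b⟩)) *
        A' (Sum.inr a) (Sum.inr b')) = 0 :=
      Finset.sum_eq_zero fun a _ => by rw [hz3]; simp
    rw [hinr, add_zero]
    have hall : (∑ ℓ : Fin j, ∑ a : Fin (ns ℓ),
        star (A' (Sum.inl ⟨ℓ, a⟩) (Sum.inl ⟨s, b⟩)) *
          A' (Sum.inl ⟨ℓ, a⟩) (Sum.inr b')) = 0 := by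
      apply Finset.sum_eq_zero; intro ℓ _
      apply Finset.sum_eq_zero; intro a _
      by_cases h1 : (s : ℕ) = (ℓ : ℕ) + 1
      · have h2 : (ℓ : ℕ) ≠ j - 1 := by have := s.isLt; omega
        rw [hz2 ℓ h2 a b']; simp
      · rw [hz1 ℓ s a b h1]; simp
    rw [hall]
    simp
  · -- inr / inl
    have hinr : (∑ a : Fin m, star (A' (Sum.inr a) (Sum.inr b)) *
        A' (Sum.inr a) (Sum.inl ⟨s', b'⟩)) = 0 :=
      Finset.sum_eq_zero fun a _ => by rw [hz3 a s' b']; simp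
    rw [hinr, add_zero]
    have hall : (∑ ℓ : Fin j, ∑ a : Fin (ns ℓ),
        star (A' (Sum.inl ⟨ℓ, a⟩) (Sum.inr b)) *
          A' (Sum.inl ⟨ℓ, a⟩) (Sum.inl ⟨s', b'⟩)) = 0 := by
      apply Finset.sum_eq_zero; intro ℓ _
      apply Finset.sum_eq_zero; intro a _
      by_cases h1 : (s' : ℕ) = (ℓ : ℕ) + 1
      · have h2 : (ℓ : ℕ) ≠ j - 1 := by have := s'.isLt; omega
        rw [hz2 ℓ h2 a b]; simp
      · rw [hz1 ℓ s' a b' h1]; simp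
    rw [hall]
    simp
  · -- inr / inr
    rw [hc2 b b']
    have hsl : ∀ c : Fin m, 1 ≤ slot (Sum.inr c : BIdx ns m) := fun c => by
      simp only [slot]; omega
    by_cases hbb : b = b' <;> simp [hbb, hsl]

/-- truncation to slots `≥ t` -/
def Pt (t : ℕ) (x : EuclideanSpace ℂ (BIdx ns m)) : EuclideanSpace ℂ (BIdx ns m) :=
  WithLp.toLp 2 (fun q => if t ≤ slot q then x q else 0)

omit hj in
include hz1 hz2 hz3 in
lemma hentry {p q : BIdx ns m} (h1 : slot q ≠ slot p + 1)
    (h2 : ¬ (slot p = j ∧ slot q = j)) : A' p q = 0 := by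
  cases p with
  | inl ta =>
    obtain ⟨t, a⟩ := ta
    cases q with
    | inl sb =>
      obtain ⟨s, b⟩ := sb
      exact hz1 t s a b (by simpa [slot] using h1)
    | inr b =>
      apply hz2 t _ a b
      simp only [slot] at h1 h2
      have := t.isLt
      omega
  | inr a =>
    cases q with
    | inl sb => exact hz3 a sb.1 sb.2
    | inr b =>
      exact absurd ⟨rfl, rfl⟩ h2

lemma toEL_apply_coord {κ : Type*} [Fintype κ] [DecidableEq κ] (M : Matrix κ κ ℂ)
    (x : EuclideanSpace ℂ κ) (p : κ) :
    (Matrix.toEuclideanLin M x) p = ∑ q, M p q * x q := by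
  rw [Matrix.toEuclideanLin_apply]
  rfl

omit hj in
include hz1 hz2 hz3 in
lemma hsupp (t : ℕ) (x : EuclideanSpace ℂ (BIdx ns m))
    (hx : ∀ q, slot q < t + 1 → x q = 0) {p : BIdx ns m} (hp : slot p < t) :
    (Matrix.toEuclideanLin A' x) p = 0 := by
  rw [toEL_apply_coord]
  apply Finset.sum_eq_zero
  intro q _
  by_cases hq : slot q < t + 1
  · rw [hx q hq, mul_zero]
  · rw [hentry A' hz1 hz2 hz3 (p := p) (q := q) (by omega)
      (by have := slot_le (ns := ns) (m := m) q; intro hc; omega), zero_mul]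

omit hj in
include hz1 hz2 hz3 in
lemma hupper (t : ℕ) (ht : t < j) (x : EuclideanSpace ℂ (BIdx ns m))
    (hx : ∀ q, t < slot q → x q = 0) {p : BIdx ns m} (hp : t ≤ slot p) :
    (Matrix.toEuclideanLin A' x) p = 0 := by
  rw [toEL_apply_coord]
  apply Finset.sum_eq_zero
  intro q _
  by_cases hq : t < slot q
  · rw [hx q hq, mul_zero]
  · rw [hentry A' hz1 hz2 hz3 (p := p) (q := q) (by omega) (by intro hc; omega), zero_mul]

include hj hz1 hz2 hz3 hc1 hc2 in
lemma toEL_gram_apply (y : EuclideanSpace ℂ (BIdx ns m)) :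
    Matrix.toEuclideanLin (A'ᴴ * A') y = Pt 1 y := by
  ext q
  rw [toEL_apply_coord]
  show _ = Pt 1 y q
  unfold Pt
  calc (∑ q', (A'ᴴ * A') q q' * y q')
      = ∑ q', (if q = q' then (if 1 ≤ slot q then y q' else 0) else 0) := by
        apply Finset.sum_congr rfl
        intro q' _
        rw [gram_entry hj A' hz1 hz2 hz3 hc1 hc2 q q']
        by_cases h1 : q = q' <;> by_cases h2 : 1 ≤ slot q <;> simp [h1, h2]
    _ = (if 1 ≤ slot q then y q else 0) := by
        rw [Finset.sum_ite_eq]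
        simp

include hj hz1 hz2 hz3 hc1 hc2 in
lemma inner_toEL_eq (x y : EuclideanSpace ℂ (BIdx ns m)) :
    ⟪Matrix.toEuclideanLin A' x, Matrix.toEuclideanLin A' y⟫ =
      ⟪(Pt 1 x : EuclideanSpace ℂ (BIdx ns m)), (Pt 1 y : EuclideanSpace ℂ (BIdx ns m))⟫ := by
  have h1 : ⟪Matrix.toEuclideanLin A' x, Matrix.toEuclideanLin A' y⟫ =
      ⟪x, Matrix.toEuclideanLin (A'ᴴ * A') y⟫ := by
    rw [toEL_mul, LinearMap.comp_apply, Matrix.toEuclideanLin_conjTranspose_eq_adjoint,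
      LinearMap.adjoint_inner_right]
  rw [h1, toEL_gram_apply hj A' hz1 hz2 hz3 hc1 hc2]
  rw [PiLp.inner_apply, PiLp.inner_apply]
  apply Finset.sum_congr rfl
  intro q _
  show ⟪x q, Pt 1 y q⟫ = ⟪Pt 1 x q, Pt 1 y q⟫
  unfold Pt
  by_cases h : 1 ≤ slot q <;> simp [h]

lemma norm_eq_of_inner_self_eq {F : Type*} [NormedAddCommGroup F] [InnerProductSpace ℂ F]
    {a b : F} (h : ⟪a, a⟫ = ⟪b, b⟫) : ‖a‖ = ‖b‖ := by
  rw [inner_self_eq_norm_sq_to_K, inner_self_eq_norm_sq_to_K] at h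
  have h5 : ‖a‖ ^ 2 = ‖b‖ ^ 2 := by exact_mod_cast h
  nlinarith [norm_nonneg a, norm_nonneg b]

include hj hz1 hz2 hz3 hc1 hc2 in
lemma norm_toEL_eq (x : EuclideanSpace ℂ (BIdx ns m)) :
    ‖Matrix.toEuclideanLin A' x‖ = ‖(Pt 1 x : EuclideanSpace ℂ (BIdx ns m))‖ :=
  norm_eq_of_inner_self_eq (inner_toEL_eq hj A' hz1 hz2 hz3 hc1 hc2 x x)

include hj hz1 hz2 hz3 hc1 hc2 in
lemma norm_pow_toEL (i : ℕ) (hij : i ≤ j) (x : EuclideanSpace ℂ (BIdx ns m)) :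
    ‖Matrix.toEuclideanLin (A' ^ i) x‖ = ‖(Pt i x : EuclideanSpace ℂ (BIdx ns m))‖ := by
  induction i generalizing x with
  | zero =>
      rw [pow_zero, toEL_one]
      congr 1
  | succ i ih =>
      rw [pow_succ, toEL_mul, LinearMap.comp_apply]
      rw [ih (by omega) (Matrix.toEuclideanLin A' x)]
      have hPT : (Pt i (Matrix.toEuclideanLin A' x) : EuclideanSpace ℂ (BIdx ns m)) =
          Matrix.toEuclideanLin A' (Pt (i+1) x) := by
        ext p
        show (if i ≤ slot p then (Matrix.toEuclideanLin A' x) p else 0) = _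
        by_cases hp : i ≤ slot p
        · rw [if_pos hp]
          have hdiff : (Matrix.toEuclideanLin A' (x - Pt (i+1) x)) p = 0 := by
            apply hupper A' hz1 hz2 hz3 i (by omega)
            · intro q hq
              show x q - Pt (i+1) x q = 0
              unfold Pt
              simp only [WithLp.ofLp_toLp]
              rw [if_pos (by omega), sub_self]
            · exact hp
          rw [map_sub] at hdiff
          have h9 : (Matrix.toEuclideanLin A' x) p - (Matrix.toEuclideanLin A' (Pt (i+1) x)) p = 0 := hdiff
          exact sub_eq_zero.mp h9
        · rw [if_neg hp]
          symm
          apply hsupp A' hz1 hz2 hz3 i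
          · intro q hq
            show (if i + 1 ≤ slot q then x q else 0) = 0
            rw [if_neg (by omega)]
          · omega
      rw [hPT, norm_toEL_eq hj A' hz1 hz2 hz3 hc1 hc2]
      congr 1
      ext q
      show (if 1 ≤ slot q then Pt (i+1) x q else 0) = Pt (i+1) x q
      unfold Pt
      simp only [WithLp.ofLp_toLp]
      by_cases h1 : 1 ≤ slot q
      · rw [if_pos h1]
      · rw [if_neg h1, if_neg (by omega)]

include hj hz1 hz2 hz3 hc1 hc2 in
lemma ker_pow_toEL (i : ℕ) (hij : i ≤ j) :
    LinearMap.ker (Matrix.toEuclideanLin (A' ^ i)) =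
      coordKer (fun q : BIdx ns m => i ≤ slot q) := by
  ext x
  rw [LinearMap.mem_ker, mem_coordKer]
  constructor
  · intro hx
    have h0 : ‖(Pt i x : EuclideanSpace ℂ (BIdx ns m))‖ = 0 := by
      rw [← norm_pow_toEL hj A' hz1 hz2 hz3 hc1 hc2 i hij x, hx, norm_zero]
    have h1 : (Pt i x : EuclideanSpace ℂ (BIdx ns m)) = 0 := norm_eq_zero.mp h0
    intro q hq
    have h2 : Pt i x q = 0 := by rw [h1]; simp
    unfold Pt at h2
    simp only [WithLp.ofLp_toLp] at h2
    rwa [if_pos hq] at h2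
  · intro hx
    have h1 : (Pt i x : EuclideanSpace ℂ (BIdx ns m)) = 0 := by
      ext q
      show (if i ≤ slot q then x q else 0) = 0
      by_cases h : i ≤ slot q
      · rw [if_pos h]; exact hx q h
      · rw [if_neg h]
    have h0 : ‖Matrix.toEuclideanLin (A' ^ i) x‖ = 0 := by
      rw [norm_pow_toEL hj A' hz1 hz2 hz3 hc1 hc2 i hij x, h1, norm_zero]
    exact norm_eq_zero.mp h0

include hj hz1 hz2 hz3 hc1 hc2 in
lemma pi_pow_block (i : ℕ) (hij : i ≤ j) : (A' ^ i).IsPartialIsometry := by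
  intro x hx
  rw [ker_pow_toEL hj A' hz1 hz2 hz3 hc1 hc2 i hij, coordKer_orthogonal] at hx
  rw [mem_coordKer] at hx
  have h1 : (Pt i x : EuclideanSpace ℂ (BIdx ns m)) = x := by
    ext q
    show (if i ≤ slot q then x q else 0) = x q
    by_cases h : i ≤ slot q
    · rw [if_pos h]
    · rw [if_neg h, hx q h]
  rw [norm_pow_toEL hj A' hz1 hz2 hz3 hc1 hc2 i hij x, h1]

end withHyps

lemma card_slot_lt (i : ℕ) (hij : i ≤ j) :
    Fintype.card {q : BIdx ns m // ¬ i ≤ slot q} =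
      ∑ ℓ : Fin j, if (ℓ : ℕ) < i then ns ℓ else 0 := by
  rw [Fintype.card_subtype]
  rw [Finset.card_filter]
  rw [Fintype.sum_sum_type]
  rw [← Finset.univ_sigma_univ, Finset.sum_sigma]
  have hinr : (∑ a : Fin m, if ¬ i ≤ slot (Sum.inr a : BIdx ns m) then 1 else 0) = 0 := by
    apply Finset.sum_eq_zero
    intro a _
    rw [if_neg]
    simp only [slot]
    omega
  rw [hinr, add_zero]
  apply Finset.sum_congr rfl
  intro ℓ _
  by_cases h : (ℓ : ℕ) < i
  · rw [if_pos h]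
    have : ∀ a : Fin (ns ℓ), (if ¬ i ≤ slot (Sum.inl ⟨ℓ, a⟩ : BIdx ns m) then 1 else 0) = 1 := by
      intro a
      rw [if_pos]
      simp only [slot]
      omega
    rw [Finset.sum_congr rfl (fun a _ => this a), Finset.sum_const, smul_eq_mul, mul_one,
      Finset.card_univ, Fintype.card_fin]
  · rw [if_neg h]
    apply Finset.sum_eq_zero
    intro a _
    rw [if_neg]
    simp only [slot]
    omega

lemma sum_ite_lt_succ (f : Fin j → ℕ) (i : ℕ) (hi : i < j) :
    (∑ ℓ : Fin j, if (ℓ : ℕ) < i + 1 then f ℓ else 0) =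
      (∑ ℓ : Fin j, if (ℓ : ℕ) < i then f ℓ else 0) + f ⟨i, hi⟩ := by
  have hterm : ∀ ℓ : Fin j, (if (ℓ : ℕ) < i + 1 then f ℓ else 0) =
      (if (ℓ : ℕ) < i then f ℓ else 0) + (if ℓ = ⟨i, hi⟩ then f ℓ else 0) := by
    intro ℓ
    rcases lt_trichotomy (ℓ : ℕ) i with h | h | h
    · rw [if_pos (by omega), if_pos h, if_neg (by intro hc; subst hc; simp at h),
        add_zero]
    · rw [if_pos (by omega), if_neg (by omega), if_pos (Fin.ext h), zero_add]
    · rw [if_neg (by omega), if_neg (by omega),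
        if_neg (by intro hc; subst hc; simp at h), add_zero]
  rw [Finset.sum_congr rfl (fun ℓ _ => hterm ℓ), Finset.sum_add_distrib,
    Finset.sum_ite_eq' Finset.univ (⟨i, hi⟩ : Fin j) f, if_pos (Finset.mem_univ _)]

lemma sum_ite_lt_top (f : Fin j → ℕ) :
    (∑ ℓ : Fin j, if (ℓ : ℕ) < j then f ℓ else 0) = ∑ ℓ : Fin j, f ℓ := by
  apply Finset.sum_congr rfl
  intro ℓ _
  rw [if_pos ℓ.isLt]

lemma card_BIdx : Fintype.card (BIdx ns m) = (∑ ℓ : Fin j, ns ℓ) + m := by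
  simp [Fintype.card_sigma]

end Block

section Forward

open Module

variable {n : ℕ}

/-- kernels of powers -/
def Kp (A : Matrix (Fin n) (Fin n) ℂ) (i : ℕ) : Submodule ℂ (EuclideanSpace ℂ (Fin n)) :=
  LinearMap.ker (Matrix.toEuclideanLin (A ^ i))

lemma Kp_zero (A : Matrix (Fin n) (Fin n) ℂ) : Kp A 0 = ⊥ := by
  unfold Kp
  rw [pow_zero, toEL_one]
  exact LinearMap.ker_id

lemma Kp_mono (A : Matrix (Fin n) (Fin n) ℂ) {s t : ℕ} (hst : s ≤ t) : Kp A s ≤ Kp A t := by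
  induction t with
  | zero => rw [Nat.le_zero.mp hst]
  | succ t ih =>
      rcases Nat.lt_or_ge s (t+1) with h | h
      · refine le_trans (ih (by omega)) ?_
        intro x hx
        unfold Kp at hx ⊢
        rw [LinearMap.mem_ker] at hx ⊢
        rw [pow_succ', toEL_mul, LinearMap.comp_apply, hx, map_zero]
      · have : s = t + 1 := by omega
        rw [this]

lemma Kp_apply_mem (A : Matrix (Fin n) (Fin n) ℂ) {i : ℕ} {x : EuclideanSpace ℂ (Fin n)}
    (hx : x ∈ Kp A (i + 1)) : Matrix.toEuclideanLin A x ∈ Kp A i := by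
  unfold Kp at hx ⊢
  rw [LinearMap.mem_ker] at hx ⊢
  rw [← LinearMap.comp_apply, ← toEL_mul, ← pow_succ]
  exact hx

/-- the pieces of the decomposition -/
def Vp (A : Matrix (Fin n) (Fin n) ℂ) (j ℓ : ℕ) : Submodule ℂ (EuclideanSpace ℂ (Fin n)) :=
  if ℓ < j then (Kp A ℓ)ᗮ ⊓ Kp A (ℓ + 1) else (Kp A j)ᗮ

lemma Vp_lt (A : Matrix (Fin n) (Fin n) ℂ) {j ℓ : ℕ} (h : ℓ < j) :
    Vp A j ℓ = (Kp A ℓ)ᗮ ⊓ Kp A (ℓ + 1) := if_pos h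

lemma Vp_top (A : Matrix (Fin n) (Fin n) ℂ) (j : ℕ) : Vp A j j = (Kp A j)ᗮ :=
  if_neg (lt_irrefl j)

lemma Vp_le_orth (A : Matrix (Fin n) (Fin n) ℂ) {j ℓ : ℕ} (h : ℓ ≤ j) :
    Vp A j ℓ ≤ (Kp A ℓ)ᗮ := by
  rcases Nat.lt_or_ge ℓ j with h1 | h1
  · rw [Vp_lt A h1]; exact inf_le_left
  · have : ℓ = j := by omega
    subst this
    rw [Vp_top]

lemma Vp_le_K (A : Matrix (Fin n) (Fin n) ℂ) {j ℓ : ℕ} (h : ℓ < j) :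
    Vp A j ℓ ≤ Kp A (ℓ + 1) := by
  rw [Vp_lt A h]; exact inf_le_right

lemma Vp_orth (A : Matrix (Fin n) (Fin n) ℂ) {j s t : ℕ} (hst : s < t) (htj : t ≤ j)
    {x y : EuclideanSpace ℂ (Fin n)} (hx : x ∈ Vp A j s) (hy : y ∈ Vp A j t) :
    ⟪x, y⟫ = 0 := by
  have hxK : x ∈ Kp A t := Kp_mono A (by omega) (Vp_le_K A (by omega) hx)
  have hyO : y ∈ (Kp A t)ᗮ := Vp_le_orth A htj hy
  exact (Submodule.mem_orthogonal _ y).mp hyO x hxK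

lemma Vp_orth' (A : Matrix (Fin n) (Fin n) ℂ) {j s t : ℕ} (hst : s ≠ t) (hsj : s ≤ j)
    (htj : t ≤ j) {x y : EuclideanSpace ℂ (Fin n)} (hx : x ∈ Vp A j s) (hy : y ∈ Vp A j t) :
    ⟪x, y⟫ = 0 := by
  rcases Nat.lt_or_ge s t with h | h
  · exact Vp_orth A h htj hx hy
  · have h2 : t < s := by omega
    rw [← inner_conj_symm, Vp_orth A h2 hsj hy hx, map_zero]

section withPI

variable {A : Matrix (Fin n) (Fin n) ℂ} {j : ℕ} (hj : 0 < j)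
  (hpi : ∀ i : ℕ, 1 ≤ i → i ≤ j → (A ^ i).IsPartialIsometry)

include hpi in
lemma claimC {k : ℕ} (hk : k + 1 ≤ j) {x : EuclideanSpace ℂ (Fin n)}
    (hx : x ∈ (Kp A (k + 1))ᗮ) : Matrix.toEuclideanLin A x ∈ (Kp A k)ᗮ := by
  rcases Nat.eq_zero_or_pos k with hk0 | hk1
  · subst hk0
    rw [Kp_zero, Submodule.bot_orthogonal_eq_top]
    trivial
  · -- main case
    have hx1 : x ∈ (Kp A 1)ᗮ := Submodule.orthogonal_le (Kp_mono A (by omega)) hx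
    have hxkerA : x ∈ (LinearMap.ker (Matrix.toEuclideanLin A))ᗮ := by
      have : Kp A 1 = LinearMap.ker (Matrix.toEuclideanLin A) := by unfold Kp; rw [pow_one]
      rwa [this] at hx1
    have hnormTx : ‖Matrix.toEuclideanLin A x‖ = ‖x‖ := by
      have h1 := hpi 1 le_rfl (by omega) x
      rw [pow_one] at h1
      exact h1 hxkerA
    set w := Matrix.toEuclideanLin A x with hw
    have hzmem : w - ((Kp A k).orthogonalProjectionOnto w : EuclideanSpace ℂ (Fin n)) ∈ (Kp A k)ᗮ :=
      Submodule.sub_starProjection_mem_orthogonal w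
    set y : EuclideanSpace ℂ (Fin n) := ((Kp A k).orthogonalProjectionOnto w : EuclideanSpace ℂ (Fin n)) with hy
    set z : EuclideanSpace ℂ (Fin n) := w - y with hz
    have hymem : y ∈ Kp A k := SetLike.coe_mem _
    have hwyz : w = y + z := by rw [hz]; abel
    -- norms
    have hAkz : Matrix.toEuclideanLin (A ^ k) w = Matrix.toEuclideanLin (A ^ k) z := by
      rw [hwyz, map_add, LinearMap.mem_ker.mp hymem, zero_add]
    have hnormk : ‖Matrix.toEuclideanLin (A ^ k) z‖ = ‖z‖ := by
      apply hpi k hk1 (by omega) z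
      have : Kp A k = LinearMap.ker (Matrix.toEuclideanLin (A ^ k)) := rfl
      rwa [← this]
    have hnormk1 : ‖Matrix.toEuclideanLin (A ^ (k + 1)) x‖ = ‖x‖ := by
      apply hpi (k + 1) (by omega) hk x
      exact hx
    have hAk1 : Matrix.toEuclideanLin (A ^ (k + 1)) x = Matrix.toEuclideanLin (A ^ k) w := by
      rw [hw, pow_succ, toEL_mul, LinearMap.comp_apply]
    -- Pythagoras
    have hinner : ⟪y, z⟫ = 0 := (Submodule.mem_orthogonal _ z).mp hzmem y hymem
    have hpyth := norm_add_sq_eq_norm_sq_add_norm_sq_of_inner_eq_zero y z hinner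
    rw [← hwyz] at hpyth
    have hxz : ‖x‖ = ‖z‖ := by
      rw [← hnormk1, hAk1, hAkz, hnormk]
    have hwz : ‖w‖ = ‖z‖ := hnormTx.trans hxz
    rw [hwz] at hpyth
    have hy0 : ‖y‖ * ‖y‖ = 0 := by linarith
    have hyzero : y = 0 := norm_eq_zero.mp (mul_self_eq_zero.mp hy0)
    have hwz2 : w = z := by rw [hwyz, hyzero, zero_add]
    rw [hwz2]
    exact hzmem

include hj hpi in
lemma Tmap_V0 {x : EuclideanSpace ℂ (Fin n)} (hx : x ∈ Vp A j 0) :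
    Matrix.toEuclideanLin A x = 0 := by
  have h1 : x ∈ Kp A 1 := Vp_le_K A hj hx
  unfold Kp at h1
  rw [LinearMap.mem_ker, pow_one] at h1
  exact h1

include hpi in
lemma Tmap_V {t : ℕ} (ht : t + 1 < j) {x : EuclideanSpace ℂ (Fin n)}
    (hx : x ∈ Vp A j (t + 1)) : Matrix.toEuclideanLin A x ∈ Vp A j t := by
  rw [Vp_lt A (by omega)]
  constructor
  · exact claimC hpi (by omega) (Vp_le_orth A (by omega) hx)
  · exact Kp_apply_mem A (Vp_le_K A ht hx)

include hpi in
lemma Tmap_Vtop {j' : ℕ} (hjj : j = j' + 1) {x : EuclideanSpace ℂ (Fin n)}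
    (hx : x ∈ Vp A j j) :
    ∃ z ∈ Vp A j j', ∃ y ∈ Vp A j j, Matrix.toEuclideanLin A x = z + y := by
  rw [Vp_top] at hx
  have hTx : Matrix.toEuclideanLin A x ∈ (Kp A j')ᗮ := by
    apply claimC hpi (by omega)
    rw [← hjj]
    exact hx
  set w := Matrix.toEuclideanLin A x with hw
  set z : EuclideanSpace ℂ (Fin n) := ((Kp A j).orthogonalProjectionOnto w : EuclideanSpace ℂ (Fin n)) with hzdef
  set y : EuclideanSpace ℂ (Fin n) := w - z with hydef
  have hzK : z ∈ Kp A j := SetLike.coe_mem _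
  have hyO : y ∈ (Kp A j)ᗮ := Submodule.sub_starProjection_mem_orthogonal w
  have hzO : z ∈ (Kp A j')ᗮ := by
    rw [Submodule.mem_orthogonal]
    intro u hu
    have h1 : ⟪u, w⟫ = 0 := (Submodule.mem_orthogonal _ w).mp hTx u hu
    have h2 : ⟪u, y⟫ = 0 :=
      (Submodule.mem_orthogonal _ y).mp hyO u (Kp_mono A (by omega) hu)
    have h3 : ⟪u, z⟫ = ⟪u, w⟫ - ⟪u, y⟫ := by
      rw [hydef, inner_sub_right]
      ring
    rw [h3, h1, h2, sub_zero]
  refine ⟨z, ?_, y, ?_, ?_⟩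
  · rw [Vp_lt A (by omega)]
    constructor
    · exact hzO
    · rw [← hjj]; exact hzK
  · rw [Vp_top]; exact hyO
  · rw [hydef]; abel

end withPI

lemma Kp_strict {A : Matrix (Fin n) (Fin n) ℂ} {j : ℕ} (hja : j ≤ A.ascent) {i : ℕ}
    (hi : i < j) : Kp A i ≠ Kp A (i + 1) := by
  intro hc
  have hmem : i ∈ {k : ℕ | LinearMap.ker (Matrix.toEuclideanLin (A ^ k)) =
      LinearMap.ker (Matrix.toEuclideanLin (A ^ (k + 1)))} := hc
  have := Nat.sInf_le hmem
  unfold Matrix.ascent at hja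
  omega

lemma Vp_finrank_add (A : Matrix (Fin n) (Fin n) ℂ) {j ℓ : ℕ} (h : ℓ < j) :
    finrank ℂ (Kp A ℓ) + finrank ℂ (Vp A j ℓ) = finrank ℂ (Kp A (ℓ + 1)) := by
  rw [Vp_lt A h]
  exact Submodule.finrank_add_inf_finrank_orthogonal (Kp_mono A (Nat.le_succ ℓ))

lemma Vp_pos {A : Matrix (Fin n) (Fin n) ℂ} {j : ℕ} (hja : j ≤ A.ascent) {ℓ : ℕ}
    (h : ℓ < j) : 0 < finrank ℂ (Vp A j ℓ) := by
  by_contra hc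
  have h0 : finrank ℂ (Vp A j ℓ) = 0 := by omega
  have h1 := Vp_finrank_add A h
  rw [h0, add_zero] at h1
  exact Kp_strict hja h
    (Submodule.eq_of_le_of_finrank_le (Kp_mono A (Nat.le_succ ℓ)) (le_of_eq h1.symm))

lemma sum_Vp_finrank (A : Matrix (Fin n) (Fin n) ℂ) {j : ℕ} {i : ℕ} (hij : i ≤ j) :
    (∑ ℓ ∈ Finset.range i, finrank ℂ (Vp A j ℓ)) = finrank ℂ (Kp A i) := by
  induction i with
  | zero =>
      rw [Finset.sum_range_zero, Kp_zero]
      exact (finrank_bot ℂ _).symm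
  | succ i ih =>
      rw [Finset.sum_range_succ, ih (by omega), Vp_finrank_add A (by omega)]

lemma total_finrank (A : Matrix (Fin n) (Fin n) ℂ) {j : ℕ} :
    (∑ ℓ : Fin j, finrank ℂ (Vp A j (ℓ : ℕ))) + finrank ℂ (Vp A j j) = n := by
  rw [Fin.sum_univ_eq_sum_range (fun ℓ => finrank ℂ (Vp A j ℓ)) j,
    sum_Vp_finrank A le_rfl, Vp_top]
  rw [Submodule.finrank_add_finrank_orthogonal]
  simp [finrank_euclideanSpace]

/-- the orthonormal family realizing the decomposition -/
def ub (A : Matrix (Fin n) (Fin n) ℂ) (j : ℕ) :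
    BIdx (fun ℓ : Fin j => finrank ℂ (Vp A j (ℓ : ℕ))) (finrank ℂ (Vp A j j)) →
      EuclideanSpace ℂ (Fin n)
  | Sum.inl p => (stdOrthonormalBasis ℂ (Vp A j (p.1 : ℕ)) p.2 : EuclideanSpace ℂ (Fin n))
  | Sum.inr a => (stdOrthonormalBasis ℂ (Vp A j j) a : EuclideanSpace ℂ (Fin n))

lemma ub_mem (A : Matrix (Fin n) (Fin n) ℂ) (j : ℕ)
    (p : BIdx (fun ℓ : Fin j => finrank ℂ (Vp A j (ℓ : ℕ))) (finrank ℂ (Vp A j j))) :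
    ub A j p ∈ Vp A j (slot p) := by
  cases p with
  | inl p => exact SetLike.coe_mem _
  | inr a => exact SetLike.coe_mem _

lemma stdONB_inner {E : Type*} [NormedAddCommGroup E] [InnerProductSpace ℂ E]
    [FiniteDimensional ℂ E] (S : Submodule ℂ E) (a b : Fin (finrank ℂ S)) :
    ⟪(stdOrthonormalBasis ℂ S a : E), (stdOrthonormalBasis ℂ S b : E)⟫ =
      if a = b then 1 else 0 := by
  have h := orthonormal_iff_ite.mp (stdOrthonormalBasis ℂ S).orthonormal a b
  rwa [Submodule.coe_inner] at h

lemma sum_inner_basis {E : Type*} [NormedAddCommGroup E] [InnerProductSpace ℂ E]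
    [FiniteDimensional ℂ E] (S : Submodule ℂ E) {x y : E} (hx : x ∈ S) (hy : y ∈ S) :
    (∑ a, ⟪x, (stdOrthonormalBasis ℂ S a : E)⟫ * ⟪(stdOrthonormalBasis ℂ S a : E), y⟫) =
      ⟪x, y⟫ := by
  have h := OrthonormalBasis.sum_inner_mul_inner (stdOrthonormalBasis ℂ S) ⟨x, hx⟩ ⟨y, hy⟩
  simpa [Submodule.coe_inner] using h

lemma ub_inner (A : Matrix (Fin n) (Fin n) ℂ) (j : ℕ)
    (p q : BIdx (fun ℓ : Fin j => finrank ℂ (Vp A j (ℓ : ℕ))) (finrank ℂ (Vp A j j))) :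
    ⟪ub A j p, ub A j q⟫ = if p = q then 1 else 0 := by
  by_cases hpq : slot p = slot q
  · cases p with
    | inl p =>
      cases q with
      | inl q =>
        obtain ⟨ℓ, a⟩ := p
        obtain ⟨ℓ', b⟩ := q
        have hll : ℓ = ℓ' := by
          simp only [slot] at hpq
          exact Fin.ext hpq
        subst hll
        show ⟪(stdOrthonormalBasis ℂ (Vp A j (ℓ : ℕ)) a : EuclideanSpace ℂ (Fin n)),
          (stdOrthonormalBasis ℂ (Vp A j (ℓ : ℕ)) b : EuclideanSpace ℂ (Fin n))⟫ = _
        rw [stdONB_inner]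
        by_cases hab : a = b <;> simp [hab]
      | inr b =>
        simp only [slot] at hpq
        have := p.1.isLt
        omega
    | inr a =>
      cases q with
      | inl q =>
        simp only [slot] at hpq
        have := q.1.isLt
        omega
      | inr b =>
        show ⟪(stdOrthonormalBasis ℂ (Vp A j j) a : EuclideanSpace ℂ (Fin n)),
          (stdOrthonormalBasis ℂ (Vp A j j) b : EuclideanSpace ℂ (Fin n))⟫ = _
        rw [stdONB_inner]
        by_cases hab : a = b <;> simp [hab]
  · have hz := Vp_orth' A hpq (slot_le p) (slot_le q) (ub_mem A j p) (ub_mem A j q)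
    rw [hz]
    have hne : p ≠ q := fun hc => hpq (by rw [hc])
    rw [if_neg hne]

/-- the unitary -/
def Umat (A : Matrix (Fin n) (Fin n) ℂ) (j : ℕ) :
    Matrix (Fin n)
      (BIdx (fun ℓ : Fin j => finrank ℂ (Vp A j (ℓ : ℕ))) (finrank ℂ (Vp A j j))) ℂ :=
  Matrix.of fun i k => ub A j k i

lemma Umat_col (A : Matrix (Fin n) (Fin n) ℂ) (j : ℕ) (i : Fin n)
    (k : BIdx (fun ℓ : Fin j => finrank ℂ (Vp A j (ℓ : ℕ))) (finrank ℂ (Vp A j j))) :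
    Umat A j i k = ub A j k i := rfl

lemma Umat_hU1 (A : Matrix (Fin n) (Fin n) ℂ) (j : ℕ) :
    (Umat A j)ᴴ * Umat A j = 1 := by
  ext p q
  rw [Matrix.mul_apply]
  have h1 : (∑ i, ((Umat A j)ᴴ) p i * (Umat A j) i q) = ⟪ub A j p, ub A j q⟫ := by
    rw [PiLp.inner_apply]
    apply Finset.sum_congr rfl
    intro i _
    rw [Matrix.conjTranspose_apply, Umat_col, Umat_col, RCLike.inner_apply']
    rfl
  rw [h1, ub_inner, Matrix.one_apply]

lemma Umat_hU2 (A : Matrix (Fin n) (Fin n) ℂ) (j : ℕ)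
    (hcard : Fintype.card
      (BIdx (fun ℓ : Fin j => finrank ℂ (Vp A j (ℓ : ℕ))) (finrank ℂ (Vp A j j))) = n) :
    Umat A j * (Umat A j)ᴴ = 1 := by
  set e := Fintype.equivFinOfCardEq hcard with he
  set W := (Umat A j).submatrix id ⇑e.symm with hW
  have hW1 : Wᴴ * W = 1 := by
    ext p q
    rw [Matrix.mul_apply]
    have h2 : ∀ i : Fin n, Wᴴ p i * W i q =
        ((Umat A j)ᴴ) (e.symm p) i * (Umat A j) i (e.symm q) := by
      intro i
      rw [hW]
      simp [Matrix.conjTranspose_apply, Matrix.submatrix_apply]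
    rw [Finset.sum_congr rfl (fun i _ => h2 i)]
    have h3 := congrFun (congrFun (Umat_hU1 A j) (e.symm p)) (e.symm q)
    rw [Matrix.mul_apply] at h3
    rw [h3, Matrix.one_apply, Matrix.one_apply]
    simp [e.symm.injective.eq_iff]
  have hW2 : W * Wᴴ = 1 := mul_eq_one_comm.mp hW1
  ext i i'
  have h4 : (Umat A j * (Umat A j)ᴴ) i i' = (W * Wᴴ) i i' := by
    rw [Matrix.mul_apply, Matrix.mul_apply]
    rw [← Equiv.sum_comp e.symm (fun q => (Umat A j) i q * ((Umat A j)ᴴ) q i')]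
    apply Finset.sum_congr rfl
    intro k _
    rw [hW]
    simp [Matrix.conjTranspose_apply, Matrix.submatrix_apply]
  rw [h4, hW2]

lemma Umat_entry (A : Matrix (Fin n) (Fin n) ℂ) (j : ℕ)
    (p q : BIdx (fun ℓ : Fin j => finrank ℂ (Vp A j (ℓ : ℕ))) (finrank ℂ (Vp A j j))) :
    ((Umat A j)ᴴ * A * Umat A j) p q =
      ⟪ub A j p, Matrix.toEuclideanLin A (ub A j q)⟫ := by
  rw [Matrix.mul_assoc, Matrix.mul_apply, PiLp.inner_apply]
  apply Finset.sum_congr rfl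
  intro i _
  rw [Matrix.conjTranspose_apply, Umat_col, RCLike.inner_apply', toEL_apply_coord]
  have h5 : (A * Umat A j) i q = ∑ i', A i i' * ub A j q i' := by
    rw [Matrix.mul_apply]
    apply Finset.sum_congr rfl
    intro i' _
    rw [Umat_col]
  rw [h5]
  rfl

lemma star_inner' {E : Type*} [NormedAddCommGroup E] [InnerProductSpace ℂ E] (x y : E) :
    star ⟪x, y⟫ = ⟪y, x⟫ := by
  rw [← starRingEnd_apply, inner_conj_symm]

section MainForward

variable {A : Matrix (Fin n) (Fin n) ℂ} {j : ℕ} (hj : 0 < j)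
  (hpi : ∀ i : ℕ, 1 ≤ i → i ≤ j → (A ^ i).IsPartialIsometry)

include hj hpi in
lemma inner_pres {x y : EuclideanSpace ℂ (Fin n)} (hx : x ∈ (Kp A 1)ᗮ)
    (hy : y ∈ (Kp A 1)ᗮ) :
    ⟪Matrix.toEuclideanLin A x, Matrix.toEuclideanLin A y⟫ = ⟪x, y⟫ := by
  have h1 := hpi 1 le_rfl hj
  rw [isPartialIsometry_iff_pi] at h1
  have hker : Kp A 1 = LinearMap.ker (Matrix.toEuclideanLin A) := by
    unfold Kp; rw [pow_one]
  rw [hker] at hx hy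
  have h2 : PI (Matrix.toEuclideanLin A) := by
    rwa [pow_one] at h1
  exact h2.inner_map_map hx hy

lemma Vp_le_orth1 {ℓ : ℕ} (hℓ : 1 ≤ ℓ) (hℓj : ℓ ≤ j) :
    Vp A j ℓ ≤ (Kp A 1)ᗮ :=
  le_trans (Vp_le_orth A hℓj) (Submodule.orthogonal_le (Kp_mono A hℓ))

end MainForward

lemma forward_exists (n : ℕ) (A : Matrix (Fin n) (Fin n) ℂ)
    (j : ℕ) (hj : 0 < j) (hja : j ≤ A.ascent)
    (hpi : ∀ i : ℕ, 1 ≤ i → i ≤ j → (A ^ i).IsPartialIsometry) :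
    ∃ (ns : Fin j → ℕ) (m : ℕ), (∀ ℓ, 0 < ns ℓ) ∧ (∑ ℓ : Fin j, ns ℓ) + m = n ∧
      ∃ (As : ∀ (ℓ : Fin j) (h : (ℓ : ℕ) + 1 < j),
          Matrix (Fin (ns ℓ)) (Fin (ns ⟨(ℓ : ℕ) + 1, h⟩)) ℂ)
        (B : Matrix (Fin (ns ⟨j - 1, Nat.sub_lt hj Nat.one_pos⟩)) (Fin m) ℂ)
        (C : Matrix (Fin m) (Fin m) ℂ)
        (A' : Matrix ((Σ ℓ : Fin j, Fin (ns ℓ)) ⊕ Fin m)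
          ((Σ ℓ : Fin j, Fin (ns ℓ)) ⊕ Fin m) ℂ),
        (∀ (ℓ : Fin j) (h : (ℓ : ℕ) + 1 < j), (As ℓ h)ᴴ * As ℓ h = 1) ∧
        (Bᴴ * B + Cᴴ * C = 1) ∧
        (∀ (ℓ : Fin j) (h : (ℓ : ℕ) + 1 < j) (a : Fin (ns ℓ))
          (b : Fin (ns ⟨(ℓ : ℕ) + 1, h⟩)),
          A' (Sum.inl ⟨ℓ, a⟩) (Sum.inl ⟨⟨(ℓ : ℕ) + 1, h⟩, b⟩) = As ℓ h a b) ∧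
        (∀ (ℓ ℓ' : Fin j) (a : Fin (ns ℓ)) (b : Fin (ns ℓ')), (ℓ' : ℕ) ≠ (ℓ : ℕ) + 1 →
          A' (Sum.inl ⟨ℓ, a⟩) (Sum.inl ⟨ℓ', b⟩) = 0) ∧
        (∀ (a : Fin (ns ⟨j - 1, Nat.sub_lt hj Nat.one_pos⟩)) (b : Fin m),
          A' (Sum.inl ⟨⟨j - 1, Nat.sub_lt hj Nat.one_pos⟩, a⟩) (Sum.inr b) = B a b) ∧
        (∀ (ℓ : Fin j), (ℓ : ℕ) ≠ j - 1 → ∀ (a : Fin (ns ℓ)) (b : Fin m),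
          A' (Sum.inl ⟨ℓ, a⟩) (Sum.inr b) = 0) ∧
        (∀ a b : Fin m, A' (Sum.inr a) (Sum.inr b) = C a b) ∧
        (∀ (a : Fin m) (ℓ : Fin j) (b : Fin (ns ℓ)), A' (Sum.inr a) (Sum.inl ⟨ℓ, b⟩) = 0) ∧
        A.UnitarilySimilarTo A' := by
  obtain ⟨j', hjj⟩ : ∃ j', j = j' + 1 := ⟨j - 1, by omega⟩
  have hsub : j - 1 = j' := by omega
  have hcard : Fintype.card
      (BIdx (fun ℓ : Fin j => finrank ℂ (Vp A j (ℓ : ℕ))) (finrank ℂ (Vp A j j))) = n := by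
    rw [card_BIdx]
    exact total_finrank A
  refine ⟨fun ℓ => finrank ℂ (Vp A j (ℓ : ℕ)), finrank ℂ (Vp A j j),
    fun ℓ => Vp_pos hja ℓ.isLt, total_finrank A, ?_⟩
  set U := Umat A j with hU
  set A' := Uᴴ * A * U with hA'
  -- column membership facts
  have humem : ∀ p, ub A j p ∈ Vp A j (slot p) := ub_mem A j
  have humem1 : ∀ (ℓ : Fin j) (a : Fin (finrank ℂ (Vp A j (ℓ : ℕ)))),
      ub A j (Sum.inl ⟨ℓ, a⟩) ∈ Vp A j (ℓ : ℕ) := fun ℓ a => humem (Sum.inl ⟨ℓ, a⟩)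
  have humem2 : ∀ a, ub A j (Sum.inr a) ∈ Vp A j j := fun a => humem (Sum.inr a)
  -- zero conditions
  have hz1 : ∀ (ℓ ℓ' : Fin j) (a : Fin (finrank ℂ (Vp A j (ℓ : ℕ))))
      (b : Fin (finrank ℂ (Vp A j (ℓ' : ℕ)))), (ℓ' : ℕ) ≠ (ℓ : ℕ) + 1 →
      A' (Sum.inl ⟨ℓ, a⟩) (Sum.inl ⟨ℓ', b⟩) = 0 := by
    intro ℓ ℓ' a b hne
    rw [hA', Umat_entry]
    rcases Nat.eq_zero_or_pos (ℓ' : ℕ) with h0 | h1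
    · have hm := humem (Sum.inl ⟨ℓ', b⟩)
      rw [show slot (Sum.inl ⟨ℓ', b⟩ :
        BIdx (fun ℓ : Fin j => finrank ℂ (Vp A j (ℓ : ℕ))) (finrank ℂ (Vp A j j))) =
        (ℓ' : ℕ) from rfl, h0] at hm
      rw [Tmap_V0 hj hpi hm, inner_zero_right]
    · obtain ⟨t, ht⟩ : ∃ t, (ℓ' : ℕ) = t + 1 := ⟨(ℓ' : ℕ) - 1, by omega⟩
      have hm := humem (Sum.inl ⟨ℓ', b⟩)
      rw [show slot (Sum.inl ⟨ℓ', b⟩ :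
        BIdx (fun ℓ : Fin j => finrank ℂ (Vp A j (ℓ : ℕ))) (finrank ℂ (Vp A j j))) =
        (ℓ' : ℕ) from rfl, ht] at hm
      have hTV := Tmap_V hpi (by have := ℓ'.isLt; omega) hm
      exact Vp_orth' A (by omega) (by have := ℓ.isLt; omega) (by have := ℓ'.isLt; omega)
        (humem1 ℓ a) hTV
  have hz3 : ∀ (a : Fin (finrank ℂ (Vp A j j))) (ℓ : Fin j)
      (b : Fin (finrank ℂ (Vp A j (ℓ : ℕ)))),
      A' (Sum.inr a) (Sum.inl ⟨ℓ, b⟩) = 0 := by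
    intro a ℓ b
    rw [hA', Umat_entry]
    rcases Nat.eq_zero_or_pos (ℓ : ℕ) with h0 | h1
    · have hm := humem (Sum.inl ⟨ℓ, b⟩)
      rw [show slot (Sum.inl ⟨ℓ, b⟩ :
        BIdx (fun ℓ : Fin j => finrank ℂ (Vp A j (ℓ : ℕ))) (finrank ℂ (Vp A j j))) =
        (ℓ : ℕ) from rfl, h0] at hm
      rw [Tmap_V0 hj hpi hm, inner_zero_right]
    · obtain ⟨t, ht⟩ : ∃ t, (ℓ : ℕ) = t + 1 := ⟨(ℓ : ℕ) - 1, by omega⟩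
      have hm := humem (Sum.inl ⟨ℓ, b⟩)
      rw [show slot (Sum.inl ⟨ℓ, b⟩ :
        BIdx (fun ℓ : Fin j => finrank ℂ (Vp A j (ℓ : ℕ))) (finrank ℂ (Vp A j j))) =
        (ℓ : ℕ) from rfl, ht] at hm
      have hTV := Tmap_V hpi (by have := ℓ.isLt; omega) hm
      exact Vp_orth' A (by have := ℓ.isLt; omega) le_rfl (by have := ℓ.isLt; omega)
        (humem2 a) hTV
  -- decomposition of images of the last block
  have hdec := fun c : Fin (finrank ℂ (Vp A j j)) =>
    Tmap_Vtop hpi hjj (humem (Sum.inr c))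
  choose zb hzmem yb hymem hTeq using hdec
  have hz2 : ∀ (ℓ : Fin j), (ℓ : ℕ) ≠ j - 1 → ∀ (a : Fin (finrank ℂ (Vp A j (ℓ : ℕ))))
      (b : Fin (finrank ℂ (Vp A j j))), A' (Sum.inl ⟨ℓ, a⟩) (Sum.inr b) = 0 := by
    intro ℓ hne a b
    rw [hA', Umat_entry, hTeq b, inner_add_right]
    rw [Vp_orth' A (show (ℓ : ℕ) ≠ j' by omega) (by have := ℓ.isLt; omega) (by omega)
      (humem1 ℓ a) (hzmem b)]
    rw [Vp_orth' A (show (ℓ : ℕ) ≠ j by have := ℓ.isLt; omega) (by have := ℓ.isLt; omega)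
      le_rfl (humem1 ℓ a) (hymem b)]
    rw [add_zero]
  -- the isometry conditions
  have hAs : ∀ (ℓ : Fin j) (h : (ℓ : ℕ) + 1 < j)
      (b b' : Fin (finrank ℂ (Vp A j ((ℓ : ℕ) + 1)))),
      (∑ a, star (A' (Sum.inl ⟨ℓ, a⟩) (Sum.inl ⟨⟨(ℓ : ℕ) + 1, h⟩, b⟩)) *
        A' (Sum.inl ⟨ℓ, a⟩) (Sum.inl ⟨⟨(ℓ : ℕ) + 1, h⟩, b'⟩)) = if b = b' then 1 else 0 := by
    intro ℓ h b b'
    have hmb : ub A j (Sum.inl ⟨⟨(ℓ : ℕ) + 1, h⟩, b⟩) ∈ Vp A j ((ℓ : ℕ) + 1) :=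
      humem (Sum.inl ⟨⟨(ℓ : ℕ) + 1, h⟩, b⟩)
    have hmb' : ub A j (Sum.inl ⟨⟨(ℓ : ℕ) + 1, h⟩, b'⟩) ∈ Vp A j ((ℓ : ℕ) + 1) :=
      humem (Sum.inl ⟨⟨(ℓ : ℕ) + 1, h⟩, b'⟩)
    have hwb := Tmap_V hpi h hmb
    have hwb' := Tmap_V hpi h hmb'
    calc (∑ a, star (A' (Sum.inl ⟨ℓ, a⟩) (Sum.inl ⟨⟨(ℓ : ℕ) + 1, h⟩, b⟩)) *
        A' (Sum.inl ⟨ℓ, a⟩) (Sum.inl ⟨⟨(ℓ : ℕ) + 1, h⟩, b'⟩))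
        = ∑ a, ⟪Matrix.toEuclideanLin A (ub A j (Sum.inl ⟨⟨(ℓ : ℕ) + 1, h⟩, b⟩)),
            ub A j (Sum.inl ⟨ℓ, a⟩)⟫ *
          ⟪ub A j (Sum.inl ⟨ℓ, a⟩),
            Matrix.toEuclideanLin A (ub A j (Sum.inl ⟨⟨(ℓ : ℕ) + 1, h⟩, b'⟩))⟫ := by
          apply Finset.sum_congr rfl
          intro a _
          rw [hA', Umat_entry, Umat_entry, star_inner']
      _ = ⟪Matrix.toEuclideanLin A (ub A j (Sum.inl ⟨⟨(ℓ : ℕ) + 1, h⟩, b⟩)),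
            Matrix.toEuclideanLin A (ub A j (Sum.inl ⟨⟨(ℓ : ℕ) + 1, h⟩, b'⟩))⟫ :=
          sum_inner_basis (Vp A j (ℓ : ℕ)) hwb hwb'
      _ = ⟪ub A j (Sum.inl ⟨⟨(ℓ : ℕ) + 1, h⟩, b⟩), ub A j (Sum.inl ⟨⟨(ℓ : ℕ) + 1, h⟩, b'⟩)⟫ :=
          inner_pres hj hpi
            (Vp_le_orth1 (by omega) (by omega) hmb)
            (Vp_le_orth1 (by omega) (by omega) hmb')
      _ = if b = b' then 1 else 0 := by
          rw [ub_inner]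
          by_cases hbb : b = b' <;> simp [hbb]
  have hBC : ∀ (b b' : Fin (finrank ℂ (Vp A j j))),
      ((∑ a, star (A' (Sum.inl ⟨⟨j - 1, Nat.sub_lt hj Nat.one_pos⟩, a⟩) (Sum.inr b)) *
        A' (Sum.inl ⟨⟨j - 1, Nat.sub_lt hj Nat.one_pos⟩, a⟩) (Sum.inr b')) +
       (∑ a, star (A' (Sum.inr a) (Sum.inr b)) * A' (Sum.inr a) (Sum.inr b'))) =
        if b = b' then 1 else 0 := by
    intro b b'
    have hzm : ∀ c, zb c ∈ Vp A j (j - 1) := by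
      intro c; rw [hsub]; exact hzmem c
    have h1 : (∑ a, star (A' (Sum.inl ⟨⟨j - 1, Nat.sub_lt hj Nat.one_pos⟩, a⟩) (Sum.inr b)) *
        A' (Sum.inl ⟨⟨j - 1, Nat.sub_lt hj Nat.one_pos⟩, a⟩) (Sum.inr b')) =
        ⟪zb b, zb b'⟫ := by
      have hterm : ∀ a, star (A' (Sum.inl ⟨⟨j - 1, Nat.sub_lt hj Nat.one_pos⟩, a⟩) (Sum.inr b)) *
          A' (Sum.inl ⟨⟨j - 1, Nat.sub_lt hj Nat.one_pos⟩, a⟩) (Sum.inr b') =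
          ⟪zb b, ub A j (Sum.inl ⟨⟨j - 1, Nat.sub_lt hj Nat.one_pos⟩, a⟩)⟫ *
          ⟪ub A j (Sum.inl ⟨⟨j - 1, Nat.sub_lt hj Nat.one_pos⟩, a⟩), zb b'⟫ := by
        intro a
        have hme : ub A j (Sum.inl ⟨⟨j - 1, Nat.sub_lt hj Nat.one_pos⟩, a⟩) ∈ Vp A j (j - 1) :=
          humem (Sum.inl ⟨⟨j - 1, Nat.sub_lt hj Nat.one_pos⟩, a⟩)
        have hy0 : ∀ c, ⟪ub A j (Sum.inl ⟨⟨j - 1, Nat.sub_lt hj Nat.one_pos⟩, a⟩), yb c⟫ = 0 := by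
          intro c
          exact Vp_orth' A (show ((j:ℕ) - 1) ≠ j by omega) (by omega) le_rfl hme (hymem c)
        have hz0 : ∀ c, ⟪ub A j (Sum.inl ⟨⟨j - 1, Nat.sub_lt hj Nat.one_pos⟩, a⟩), zb c⟫ =
            ⟪ub A j (Sum.inl ⟨⟨j - 1, Nat.sub_lt hj Nat.one_pos⟩, a⟩),
              Matrix.toEuclideanLin A (ub A j (Sum.inr c))⟫ := by
          intro c
          rw [hTeq c, inner_add_right, hy0 c, add_zero]
        rw [hA', Umat_entry, Umat_entry, ← hz0 b, ← hz0 b', star_inner']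
      rw [Finset.sum_congr rfl (fun a _ => hterm a)]
      exact sum_inner_basis (Vp A j (j - 1)) (hzm b) (hzm b')
    have h2 : (∑ a, star (A' (Sum.inr a) (Sum.inr b)) * A' (Sum.inr a) (Sum.inr b')) =
        ⟪yb b, yb b'⟫ := by
      have hterm : ∀ a, star (A' (Sum.inr a) (Sum.inr b)) * A' (Sum.inr a) (Sum.inr b') =
          ⟪yb b, ub A j (Sum.inr a)⟫ * ⟪ub A j (Sum.inr a), yb b'⟫ := by
        intro a
        have hme : ub A j (Sum.inr a) ∈ Vp A j j := humem (Sum.inr a)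
        have hz0 : ∀ c, ⟪ub A j (Sum.inr a), zb c⟫ = 0 := by
          intro c
          rw [← inner_conj_symm]
          rw [Vp_orth' A (show j' ≠ j by omega) (by omega) le_rfl (hzmem c) hme, map_zero]
        have hy0 : ∀ c, ⟪ub A j (Sum.inr a), yb c⟫ =
            ⟪ub A j (Sum.inr a), Matrix.toEuclideanLin A (ub A j (Sum.inr c))⟫ := by
          intro c
          rw [hTeq c, inner_add_right, hz0 c, zero_add]
        rw [hA', Umat_entry, Umat_entry, ← hy0 b, ← hy0 b', star_inner']
      rw [Finset.sum_congr rfl (fun a _ => hterm a)]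
      exact sum_inner_basis (Vp A j j) (hymem b) (hymem b')
    rw [h1, h2]
    have hcross1 : ⟪zb b, yb b'⟫ = 0 :=
      Vp_orth' A (show j' ≠ j by omega) (by omega) le_rfl (hzmem b) (hymem b')
    have hcross2 : ⟪yb b, zb b'⟫ = 0 :=
      Vp_orth' A (show j ≠ j' by omega) le_rfl (by omega) (hymem b) (hzmem b')
    have hsumup : ⟪zb b, zb b'⟫ + ⟪yb b, yb b'⟫ =
        ⟪Matrix.toEuclideanLin A (ub A j (Sum.inr b)),
          Matrix.toEuclideanLin A (ub A j (Sum.inr b'))⟫ := by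
      rw [hTeq b, hTeq b', inner_add_left, inner_add_right, inner_add_right,
        hcross1, hcross2]
      ring
    rw [hsumup, inner_pres hj hpi (Vp_le_orth1 (by omega) le_rfl (humem2 b))
      (Vp_le_orth1 (by omega) le_rfl (humem2 b')), ub_inner]
    by_cases hbb : b = b' <;> simp [hbb]
  -- assemble
  refine ⟨fun ℓ h => Matrix.of fun a b => A' (Sum.inl ⟨ℓ, a⟩) (Sum.inl ⟨⟨(ℓ : ℕ) + 1, h⟩, b⟩),
    Matrix.of fun a b => A' (Sum.inl ⟨⟨j - 1, Nat.sub_lt hj Nat.one_pos⟩, a⟩) (Sum.inr b),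
    Matrix.of fun a b => A' (Sum.inr a) (Sum.inr b), A', ?_, ?_,
    fun ℓ h a b => rfl, hz1, fun a b => rfl, hz2, fun a b => rfl, hz3,
    ⟨U, Umat_hU1 A j, Umat_hU2 A j hcard, rfl⟩⟩
  · intro ℓ h
    ext b b'
    rw [Matrix.mul_apply, Matrix.one_apply]
    calc (∑ a, ((Matrix.of fun a b => A' (Sum.inl ⟨ℓ, a⟩) (Sum.inl ⟨⟨(ℓ : ℕ) + 1, h⟩, b⟩))ᴴ) b a *
          (Matrix.of fun a b => A' (Sum.inl ⟨ℓ, a⟩) (Sum.inl ⟨⟨(ℓ : ℕ) + 1, h⟩, b⟩)) a b')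
        = ∑ a, star (A' (Sum.inl ⟨ℓ, a⟩) (Sum.inl ⟨⟨(ℓ : ℕ) + 1, h⟩, b⟩)) *
            A' (Sum.inl ⟨ℓ, a⟩) (Sum.inl ⟨⟨(ℓ : ℕ) + 1, h⟩, b'⟩) := rfl
      _ = if b = b' then 1 else 0 := hAs ℓ h b b'
  · ext b b'
    rw [Matrix.add_apply, Matrix.mul_apply, Matrix.mul_apply, Matrix.one_apply]
    exact hBC b b'

end Forward

section Derive

variable {j : ℕ} {ns : Fin j → ℕ} {m : ℕ}

lemma derive_hc1 (A' : Matrix (BIdx ns m) (BIdx ns m) ℂ)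
    (As : ∀ (ℓ : Fin j) (h : (ℓ : ℕ) + 1 < j),
      Matrix (Fin (ns ℓ)) (Fin (ns ⟨(ℓ : ℕ) + 1, h⟩)) ℂ)
    (hAs : ∀ (ℓ : Fin j) (h : (ℓ : ℕ) + 1 < j), (As ℓ h)ᴴ * As ℓ h = 1)
    (hE3 : ∀ (ℓ : Fin j) (h : (ℓ : ℕ) + 1 < j) (a : Fin (ns ℓ))
      (b : Fin (ns ⟨(ℓ : ℕ) + 1, h⟩)),
      A' (Sum.inl ⟨ℓ, a⟩) (Sum.inl ⟨⟨(ℓ : ℕ) + 1, h⟩, b⟩) = As ℓ h a b) :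
    ∀ (ℓ s : Fin j), (s : ℕ) = (ℓ : ℕ) + 1 → ∀ (b b' : Fin (ns s)),
      (∑ a, star (A' (Sum.inl ⟨ℓ, a⟩) (Sum.inl ⟨s, b⟩)) *
        A' (Sum.inl ⟨ℓ, a⟩) (Sum.inl ⟨s, b'⟩)) = if b = b' then 1 else 0 := by
  intro ℓ s hs
  have hlt : (ℓ : ℕ) + 1 < j := hs ▸ s.isLt
  have hse : s = ⟨(ℓ : ℕ) + 1, hlt⟩ := Fin.ext hs
  subst hse
  intro b b'
  calc (∑ a, star (A' (Sum.inl ⟨ℓ, a⟩) (Sum.inl ⟨⟨(ℓ : ℕ) + 1, hlt⟩, b⟩)) *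
        A' (Sum.inl ⟨ℓ, a⟩) (Sum.inl ⟨⟨(ℓ : ℕ) + 1, hlt⟩, b'⟩))
      = ∑ a, star (As ℓ hlt a b) * As ℓ hlt a b' := by
        apply Finset.sum_congr rfl
        intro a _
        rw [hE3, hE3]
    _ = ((As ℓ hlt)ᴴ * As ℓ hlt) b b' := by
        rw [Matrix.mul_apply]
        apply Finset.sum_congr rfl
        intro a _
        rw [Matrix.conjTranspose_apply]
    _ = (1 : Matrix (Fin (ns ⟨(ℓ : ℕ) + 1, hlt⟩)) (Fin (ns ⟨(ℓ : ℕ) + 1, hlt⟩)) ℂ) b b' := by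
        rw [hAs]
    _ = if b = b' then 1 else 0 := Matrix.one_apply

lemma derive_hc2 (hj : 0 < j) (A' : Matrix (BIdx ns m) (BIdx ns m) ℂ)
    (B : Matrix (Fin (ns ⟨j - 1, Nat.sub_lt hj Nat.one_pos⟩)) (Fin m) ℂ)
    (C : Matrix (Fin m) (Fin m) ℂ)
    (hBC : Bᴴ * B + Cᴴ * C = 1)
    (hE5 : ∀ (a : Fin (ns ⟨j - 1, Nat.sub_lt hj Nat.one_pos⟩)) (b : Fin m),
      A' (Sum.inl ⟨⟨j - 1, Nat.sub_lt hj Nat.one_pos⟩, a⟩) (Sum.inr b) = B a b)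
    (hz2 : ∀ (ℓ : Fin j), (ℓ : ℕ) ≠ j - 1 → ∀ (a : Fin (ns ℓ)) (b : Fin m),
      A' (Sum.inl ⟨ℓ, a⟩) (Sum.inr b) = 0)
    (hE7 : ∀ a b : Fin m, A' (Sum.inr a) (Sum.inr b) = C a b) :
    ∀ (b b' : Fin m),
      ((∑ ℓ : Fin j, ∑ a, star (A' (Sum.inl ⟨ℓ, a⟩) (Sum.inr b)) *
        A' (Sum.inl ⟨ℓ, a⟩) (Sum.inr b')) +
       (∑ a, star (A' (Sum.inr a) (Sum.inr b)) * A' (Sum.inr a) (Sum.inr b')))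
        = if b = b' then 1 else 0 := by
  intro b b'
  have h1 : (∑ ℓ : Fin j, ∑ a, star (A' (Sum.inl ⟨ℓ, a⟩) (Sum.inr b)) *
      A' (Sum.inl ⟨ℓ, a⟩) (Sum.inr b')) = (Bᴴ * B) b b' := by
    rw [Finset.sum_eq_single (⟨j - 1, Nat.sub_lt hj Nat.one_pos⟩ : Fin j)]
    · rw [Matrix.mul_apply]
      apply Finset.sum_congr rfl
      intro a _
      rw [Matrix.conjTranspose_apply, hE5, hE5]
    · intro ℓ _ hℓ
      apply Finset.sum_eq_zero
      intro a _
      rw [hz2 ℓ (fun hc => hℓ (Fin.ext hc)) a b]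
      simp
    · intro h
      exact absurd (Finset.mem_univ _) h
  have h2 : (∑ a, star (A' (Sum.inr a) (Sum.inr b)) * A' (Sum.inr a) (Sum.inr b')) =
      (Cᴴ * C) b b' := by
    rw [Matrix.mul_apply]
    apply Finset.sum_congr rfl
    intro a _
    rw [Matrix.conjTranspose_apply, hE7, hE7]
  rw [h1, h2]
  have h3 : (Bᴴ * B) b b' + (Cᴴ * C) b b' = (Bᴴ * B + Cᴴ * C) b b' := rfl
  rw [h3, hBC, Matrix.one_apply]

end Derive

end PPI

open PPI Module

/-- **Theorem 2.2.** Let `A` be `n`-by-`n` and `1 ≤ j ≤ a(A)`. Then `A, A², …, A^j` are all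
partial isometries if and only if there are positive integers `n₁, …, n_j` and `m ≥ 0` with
`n₁ + ⋯ + n_j + m = n`, matrices `A_ℓ` (`n_ℓ`-by-`n_{ℓ+1}`, `A_ℓ* A_ℓ = I`), an `n_j`-by-`m`
matrix `B` and an `m`-by-`m` matrix `C` with `B*B + C*C = I`, such that `A` is unitarily
similar to the block matrix `A'` on `ℂ^{n₁} ⊕ ⋯ ⊕ ℂ^{n_j} ⊕ ℂ^m` whose `(ℓ, ℓ+1)` block is
`A_ℓ`, whose `(j, j+1)` block is `B`, whose `(j+1, j+1)` block is `C`, and all other blocks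
zero.  Moreover, in this case (i.e. for any such representation) `n₁ = dim ker A`,
`n_ℓ = dim ker A^ℓ - dim ker A^(ℓ-1)` for `2 ≤ ℓ ≤ j`, and `m = rank A^j`.
(Indices are `0`-based here: `ns ⟨ℓ⟩` is the paper's `n_{ℓ+1}`.) -/
theorem pow_isPartialIsometry_iff_blockForm (n : ℕ) (A : Matrix (Fin n) (Fin n) ℂ)
    (j : ℕ) (hj : 0 < j) (hja : j ≤ A.ascent) :
    ((∀ i : ℕ, 1 ≤ i → i ≤ j → (A ^ i).IsPartialIsometry) ↔
      ∃ (ns : Fin j → ℕ) (m : ℕ), (∀ ℓ, 0 < ns ℓ) ∧ (∑ ℓ : Fin j, ns ℓ) + m = n ∧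
        ∃ (As : ∀ (ℓ : Fin j) (h : (ℓ : ℕ) + 1 < j),
            Matrix (Fin (ns ℓ)) (Fin (ns ⟨(ℓ : ℕ) + 1, h⟩)) ℂ)
          (B : Matrix (Fin (ns ⟨j - 1, Nat.sub_lt hj Nat.one_pos⟩)) (Fin m) ℂ)
          (C : Matrix (Fin m) (Fin m) ℂ)
          (A' : Matrix ((Σ ℓ : Fin j, Fin (ns ℓ)) ⊕ Fin m)
            ((Σ ℓ : Fin j, Fin (ns ℓ)) ⊕ Fin m) ℂ),
          (∀ (ℓ : Fin j) (h : (ℓ : ℕ) + 1 < j), (As ℓ h)ᴴ * As ℓ h = 1) ∧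
          (Bᴴ * B + Cᴴ * C = 1) ∧
          (∀ (ℓ : Fin j) (h : (ℓ : ℕ) + 1 < j) (a : Fin (ns ℓ))
            (b : Fin (ns ⟨(ℓ : ℕ) + 1, h⟩)),
            A' (Sum.inl ⟨ℓ, a⟩) (Sum.inl ⟨⟨(ℓ : ℕ) + 1, h⟩, b⟩) = As ℓ h a b) ∧
          (∀ (ℓ ℓ' : Fin j) (a : Fin (ns ℓ)) (b : Fin (ns ℓ')), (ℓ' : ℕ) ≠ (ℓ : ℕ) + 1 →
            A' (Sum.inl ⟨ℓ, a⟩) (Sum.inl ⟨ℓ', b⟩) = 0) ∧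
          (∀ (a : Fin (ns ⟨j - 1, Nat.sub_lt hj Nat.one_pos⟩)) (b : Fin m),
            A' (Sum.inl ⟨⟨j - 1, Nat.sub_lt hj Nat.one_pos⟩, a⟩) (Sum.inr b) = B a b) ∧
          (∀ (ℓ : Fin j), (ℓ : ℕ) ≠ j - 1 → ∀ (a : Fin (ns ℓ)) (b : Fin m),
            A' (Sum.inl ⟨ℓ, a⟩) (Sum.inr b) = 0) ∧
          (∀ a b : Fin m, A' (Sum.inr a) (Sum.inr b) = C a b) ∧
          (∀ (a : Fin m) (ℓ : Fin j) (b : Fin (ns ℓ)), A' (Sum.inr a) (Sum.inl ⟨ℓ, b⟩) = 0) ∧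
          A.UnitarilySimilarTo A')
    ∧
    (∀ (ns : Fin j → ℕ) (m : ℕ), (∀ ℓ, 0 < ns ℓ) → (∑ ℓ : Fin j, ns ℓ) + m = n →
      ∀ (As : ∀ (ℓ : Fin j) (h : (ℓ : ℕ) + 1 < j),
            Matrix (Fin (ns ℓ)) (Fin (ns ⟨(ℓ : ℕ) + 1, h⟩)) ℂ)
          (B : Matrix (Fin (ns ⟨j - 1, Nat.sub_lt hj Nat.one_pos⟩)) (Fin m) ℂ)
          (C : Matrix (Fin m) (Fin m) ℂ)
          (A' : Matrix ((Σ ℓ : Fin j, Fin (ns ℓ)) ⊕ Fin m)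
            ((Σ ℓ : Fin j, Fin (ns ℓ)) ⊕ Fin m) ℂ),
        ((∀ (ℓ : Fin j) (h : (ℓ : ℕ) + 1 < j), (As ℓ h)ᴴ * As ℓ h = 1) ∧
          (Bᴴ * B + Cᴴ * C = 1) ∧
          (∀ (ℓ : Fin j) (h : (ℓ : ℕ) + 1 < j) (a : Fin (ns ℓ))
            (b : Fin (ns ⟨(ℓ : ℕ) + 1, h⟩)),
            A' (Sum.inl ⟨ℓ, a⟩) (Sum.inl ⟨⟨(ℓ : ℕ) + 1, h⟩, b⟩) = As ℓ h a b) ∧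
          (∀ (ℓ ℓ' : Fin j) (a : Fin (ns ℓ)) (b : Fin (ns ℓ')), (ℓ' : ℕ) ≠ (ℓ : ℕ) + 1 →
            A' (Sum.inl ⟨ℓ, a⟩) (Sum.inl ⟨ℓ', b⟩) = 0) ∧
          (∀ (a : Fin (ns ⟨j - 1, Nat.sub_lt hj Nat.one_pos⟩)) (b : Fin m),
            A' (Sum.inl ⟨⟨j - 1, Nat.sub_lt hj Nat.one_pos⟩, a⟩) (Sum.inr b) = B a b) ∧
          (∀ (ℓ : Fin j), (ℓ : ℕ) ≠ j - 1 → ∀ (a : Fin (ns ℓ)) (b : Fin m),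
            A' (Sum.inl ⟨ℓ, a⟩) (Sum.inr b) = 0) ∧
          (∀ a b : Fin m, A' (Sum.inr a) (Sum.inr b) = C a b) ∧
          (∀ (a : Fin m) (ℓ : Fin j) (b : Fin (ns ℓ)), A' (Sum.inr a) (Sum.inl ⟨ℓ, b⟩) = 0)) →
        A.UnitarilySimilarTo A' →
        (ns ⟨0, hj⟩ = Module.finrank ℂ (LinearMap.ker (Matrix.toEuclideanLin A)) ∧
         (∀ ℓ : Fin j, 1 ≤ (ℓ : ℕ) →
            ns ℓ =
              Module.finrank ℂ (LinearMap.ker (Matrix.toEuclideanLin (A ^ ((ℓ : ℕ) + 1)))) -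
                Module.finrank ℂ (LinearMap.ker (Matrix.toEuclideanLin (A ^ (ℓ : ℕ))))) ∧
         m = (A ^ j).rank)) := by
  constructor
  · constructor
    · intro hpi
      exact forward_exists n A j hj hja hpi
    · rintro ⟨ns, m, hpos, hsum, As, B, C, A', hAs, hBC, hE3, hz1, hE5, hz2, hE7, hz3,
        U, hU1, hU2, hAA⟩
      intro i h1i hij
      have hc1 := derive_hc1 A' As hAs hE3
      have hc2 := derive_hc2 hj A' B C hBC hE5 hz2 hE7
      have hpib := pi_pow_block hj A' hz1 hz2 hz3 hc1 hc2 i hij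
      have hApow : A' ^ i = Uᴴ * (A ^ i) * U := unitarilySimilarTo_pow U hU1 hU2 hAA i
      exact (unitarilySimilarTo_isPartialIsometry U hU1 hU2 hApow).mpr hpib
  · intro ns m hpos hsum As B C A' hconds hsim
    obtain ⟨hAs, hBC, hE3, hz1, hE5, hz2, hE7, hz3⟩ := hconds
    obtain ⟨U, hU1, hU2, hAA⟩ := hsim
    have hc1 := derive_hc1 A' As hAs hE3
    have hc2 := derive_hc2 hj A' B C hBC hE5 hz2 hE7
    have hker : ∀ i : ℕ, i ≤ j →
        finrank ℂ (LinearMap.ker (Matrix.toEuclideanLin (A ^ i))) =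
          ∑ ℓ : Fin j, if (ℓ : ℕ) < i then ns ℓ else 0 := by
      intro i hij
      have e1 : A' ^ i = Uᴴ * (A ^ i) * U := unitarilySimilarTo_pow U hU1 hU2 hAA i
      rw [← finrank_ker_unitary U hU1 hU2 e1]
      rw [ker_pow_toEL hj A' hz1 hz2 hz3 hc1 hc2 i hij, finrank_coordKer]
      exact card_slot_lt i hij
    refine ⟨?_, ?_, ?_⟩
    · have h1 := hker 1 (by omega)
      rw [pow_one] at h1
      rw [sum_ite_lt_succ ns 0 hj] at h1
      have h0 : (∑ ℓ : Fin j, if (ℓ : ℕ) < 0 then ns ℓ else 0) = 0 :=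
        Finset.sum_eq_zero fun ℓ _ => if_neg (by omega)
      rw [h0, zero_add] at h1
      exact h1.symm
    · intro ℓ hℓ
      have ha := hker ((ℓ : ℕ) + 1) (by have := ℓ.isLt; omega)
      have hb := hker (ℓ : ℕ) (by have := ℓ.isLt; omega)
      rw [sum_ite_lt_succ ns (ℓ : ℕ) ℓ.isLt] at ha
      rw [Fin.eta] at ha
      omega
    · have e1 : A' ^ j = Uᴴ * (A ^ j) * U := unitarilySimilarTo_pow U hU1 hU2 hAA j
      have hr : (A' ^ j).rank = (A ^ j).rank := rank_unitary U hU1 hU2 e1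
      have h2 := rank_add_finrank_ker (A' ^ j)
      rw [ker_pow_toEL hj A' hz1 hz2 hz3 hc1 hc2 j le_rfl, finrank_coordKer,
        card_slot_lt j le_rfl, sum_ite_lt_top, card_BIdx] at h2
      omega

end
end

section
/- Let A be a noninvertible matrix of class S_n. Then a(A) equals the algebraic multiplicity of the eigenvalue 0 of A. -/
open Matrix

noncomputable section

/-- **Proposition 3.1 (a).** If `A` is a noninvertible matrix of class `S_n`, then `a(A)`
equals the algebraic multiplicity of the eigenvalue `0` of `A`. -/
theorem ascent_eq_rootMultiplicity_of_isClassSn (n : ℕ) (A : Matrix (Fin n) (Fin n) ℂ)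
    (hA : A.IsClassSn) (hni : ¬ IsUnit A) :
    A.ascent = Polynomial.rootMultiplicity 0 A.charpoly := by
  classical
  set b : Module.Basis (Fin n) ℂ (EuclideanSpace ℂ (Fin n)) := PiLp.basisFun 2 ℂ (Fin n) with hb
  set φ : Module.End ℂ (EuclideanSpace ℂ (Fin n)) := Matrix.toEuclideanLin A with hφ
  have htoLin : ∀ M : Matrix (Fin n) (Fin n) ℂ,
      Matrix.toEuclideanLin M = Matrix.toLin b b M := fun M => rfl
  have hmul : ∀ M N : Matrix (Fin n) (Fin n) ℂ,
      Matrix.toEuclideanLin (M * N) = Matrix.toEuclideanLin M ∘ₗ Matrix.toEuclideanLin N := by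
    intro M N
    rw [htoLin, htoLin, htoLin, Matrix.toLin_mul b b b]
  have hpow : ∀ k : ℕ, Matrix.toEuclideanLin (A ^ k) = φ ^ k := by
    intro k
    induction k with
    | zero => simp [htoLin, Matrix.toLin_one, Module.End.one_eq_id]
    | succ k ih =>
      rw [pow_succ, hmul, ih, pow_succ, Module.End.mul_eq_comp, hφ]
  have hfr : Module.finrank ℂ (EuclideanSpace ℂ (Fin n)) = n := finrank_euclideanSpace_fin
  -- geometric multiplicity at most one
  have hrank : (1 - Aᴴ * A).rank = 1 := hA.2.2
  have hn1 : 1 ≤ n := by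
    have h := (1 - Aᴴ * A).rank_le_card_width
    rw [hrank] at h
    simpa using h
  set ψ : Module.End ℂ (EuclideanSpace ℂ (Fin n)) := Matrix.toEuclideanLin (1 - Aᴴ * A) with hψ
  have hkerψ : Module.finrank ℂ (LinearMap.ker ψ) = n - 1 := by
    have h1 : Module.finrank ℂ (LinearMap.range ψ) = 1 := by
      rw [hψ, htoLin, ← Matrix.rank_eq_finrank_range_toLin _ b b, hrank]
    have h2 := LinearMap.finrank_range_add_finrank_ker ψ
    rw [hfr, h1] at h2
    omega
  have hdisj : LinearMap.ker φ ⊓ LinearMap.ker ψ = ⊥ := by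
    rw [Submodule.eq_bot_iff]
    rintro x ⟨hx1, hx2⟩
    have hx1' : φ x = 0 := hx1
    have hx2' : ψ x = 0 := hx2
    have e1 : ψ x = x - Matrix.toEuclideanLin Aᴴ (φ x) := by
      rw [hψ, map_sub, hmul]
      simp only [htoLin, Matrix.toLin_one, LinearMap.sub_apply, LinearMap.id_apply,
        LinearMap.coe_comp, Function.comp_apply]
      rfl
    rw [hx2', hx1', map_zero, sub_zero] at e1
    exact e1.symm
  have hgeo : Module.finrank ℂ (LinearMap.ker φ) ≤ 1 := by
    have h1 := Submodule.finrank_sup_add_finrank_inf_eq (LinearMap.ker φ) (LinearMap.ker ψ)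
    rw [hdisj] at h1
    have hle : Module.finrank ℂ ↥(LinearMap.ker φ ⊔ LinearMap.ker ψ) ≤ n := by
      calc Module.finrank ℂ ↥(LinearMap.ker φ ⊔ LinearMap.ker ψ)
          ≤ Module.finrank ℂ (EuclideanSpace ℂ (Fin n)) := Submodule.finrank_le _
        _ = n := hfr
    rw [finrank_bot] at h1
    omega
  -- kernels of powers grow by at most one
  have hmono : ∀ k : ℕ, LinearMap.ker (φ ^ k) ≤ LinearMap.ker (φ ^ (k + 1)) := by
    intro k
    rw [pow_succ', Module.End.mul_eq_comp]
    exact LinearMap.ker_le_ker_comp _ _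
  have hstep : ∀ k : ℕ, Module.finrank ℂ (LinearMap.ker (φ ^ (k + 1))) ≤
      Module.finrank ℂ (LinearMap.ker (φ ^ k)) + 1 := by
    intro k
    set N := LinearMap.ker (φ ^ (k + 1)) with hN
    set g : N →ₗ[ℂ] EuclideanSpace ℂ (Fin n) := (φ ^ k).domRestrict N with hg
    have hkg : Module.finrank ℂ (LinearMap.ker g) =
        Module.finrank ℂ (LinearMap.ker (φ ^ k)) := by
      rw [hg, LinearMap.ker_domRestrict]
      exact LinearEquiv.finrank_eq (Submodule.comapSubtypeEquivOfLe (hmono k))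
    have hrg : Module.finrank ℂ (LinearMap.range g) ≤ 1 := by
      refine le_trans (Submodule.finrank_mono ?_) hgeo
      rintro _ ⟨⟨x, hx⟩, rfl⟩
      simp only [LinearMap.mem_ker, hg, LinearMap.domRestrict_apply]
      have hx' : (φ ^ (k + 1)) x = 0 := hx
      rw [pow_succ'] at hx'
      simpa [Module.End.mul_apply] using hx'
    have h2 := LinearMap.finrank_range_add_finrank_ker g
    rw [hkg] at h2
    omega
  -- the set defining the ascent
  set S : Set ℕ := {k | LinearMap.ker (φ ^ k) = LinearMap.ker (φ ^ (k + 1))} with hS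
  have hnS : n ∈ S := by
    have h1 : LinearMap.ker (φ ^ (n + 1)) =
        LinearMap.ker (φ ^ Module.finrank ℂ (EuclideanSpace ℂ (Fin n))) :=
      Module.End.ker_pow_eq_ker_pow_finrank_of_le (by rw [hfr]; omega)
    rw [hfr] at h1
    exact h1.symm
  set a := sInf S with ha
  have haS : a ∈ S := Nat.sInf_mem ⟨n, hnS⟩
  have han : a ≤ n := Nat.sInf_le hnS
  have hda : ∀ k, k ≤ a → Module.finrank ℂ (LinearMap.ker (φ ^ k)) = k := by
    intro k
    induction k with
    | zero => intro _; simp [Module.End.one_eq_id]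
    | succ k ih =>
      intro hk
      have hklt : k < a := hk
      have hnot : k ∉ S := Nat.notMem_of_lt_sInf hklt
      have hlt : LinearMap.ker (φ ^ k) < LinearMap.ker (φ ^ (k + 1)) :=
        lt_of_le_of_ne (hmono k) hnot
      have h1 := Submodule.finrank_lt_finrank_of_lt hlt
      have h2 := hstep k
      have h3 := ih (le_of_lt hklt)
      omega
  have hconst : LinearMap.ker (φ ^ n) = LinearMap.ker (φ ^ a) := by
    have h := Module.End.ker_pow_constant (f := φ) (k := a) haS (n - a)
    rw [Nat.add_sub_cancel' han] at h
    exact h.symm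
  have hmax : Module.finrank ℂ (Module.End.maxGenEigenspace φ 0) = a := by
    have hV : Module.End.maxGenEigenspace φ 0 = ⨆ (k : ℕ), LinearMap.ker (φ ^ k) := by
      simp [← Module.End.iSup_genEigenspace_eq, Module.End.genEigenspace_nat]
    have hsup : (⨆ (k : ℕ), LinearMap.ker (φ ^ k)) = LinearMap.ker (φ ^ a) := by
      apply le_antisymm
      · apply iSup_le
        intro k
        calc LinearMap.ker (φ ^ k)
            ≤ LinearMap.ker (φ ^ Module.finrank ℂ (EuclideanSpace ℂ (Fin n))) :=
              Module.End.ker_pow_le_ker_pow_finrank φ k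
          _ = LinearMap.ker (φ ^ a) := by rw [hfr, hconst]
      · exact le_iSup (fun k => LinearMap.ker (φ ^ k)) a
    rw [hV, hsup, hda a le_rfl]
  have hchar : A.charpoly = φ.charpoly := by
    rw [← LinearMap.charpoly_toMatrix φ b]
    congr 1
    rw [hφ, htoLin, LinearMap.toMatrix_toLin]
  have hfinal : Polynomial.rootMultiplicity 0 A.charpoly = a := by
    rw [Polynomial.rootMultiplicity_eq_natTrailingDegree', hchar,
      ← LinearMap.finrank_maxGenEigenspace_zero_eq, hmax]
  rw [hfinal]
  have hsets : {k : ℕ | LinearMap.ker (Matrix.toEuclideanLin (A ^ k)) =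
      LinearMap.ker (Matrix.toEuclideanLin (A ^ (k + 1)))} = S := by
    ext k
    simp only [Set.mem_setOf_eq, hpow, hS]
  unfold Matrix.ascent
  rw [hsets]


end
end
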